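/- arXiv:1405.2037 — 12 statements merged into one kernel-verified Lean document; each statement's English description precedes it below -/
import Mathlib

section
/- The projection of the cone of n×n Euclidean distance matrices onto any subset E of off-diagonal entries is a closed subset of R^E. -/
/-- Any configuration of `n` points in any Euclidean space can be mapped into `ℝ^n`
preserving all pairwise distances. -/
lemma exists_config_embed {n k : ℕ} (p : Fin n → EuclideanSpace ℝ (Fin k)) :
    ∃ q : Fin n → EuclideanSpace ℝ (Fin n), ∀ i j, dist (q i) (q j) = dist (p i) (p j) := by
  rcases Nat.eq_zero_or_pos n with hn | hn
  · subst hn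
    exact ⟨fun i => 0, fun i => i.elim0⟩
  · set i₀ : Fin n := ⟨0, hn⟩
    set v : Fin n → EuclideanSpace ℝ (Fin k) := fun i => p i - p i₀ with hv
    set W : Submodule ℝ (EuclideanSpace ℝ (Fin k)) := Submodule.span ℝ (Set.range v) with hW
    haveI : FiniteDimensional ℝ W := FiniteDimensional.span_of_finite ℝ (Set.finite_range v)
    set d : ℕ := Module.finrank ℝ W with hd
    have hdn : d ≤ n := by
      have := finrank_range_le_card (R := ℝ) v
      simpa [hd, hW, Set.finrank] using this
    set b := stdOrthonormalBasis ℝ W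
    have hmem : ∀ i, v i ∈ W := fun i => Submodule.subset_span ⟨i, rfl⟩
    set u : Fin n → EuclideanSpace ℝ (Fin d) := fun i => b.repr ⟨v i, hmem i⟩ with hu
    set ext : EuclideanSpace ℝ (Fin d) → EuclideanSpace ℝ (Fin n) :=
      fun x => WithLp.toLp 2 (fun j => if h : (j : ℕ) < d then x ⟨j, h⟩ else 0) with hext
    set q : Fin n → EuclideanSpace ℝ (Fin n) := fun i => ext (u i) with hq
    refine ⟨q, fun i j => ?_⟩
    have key : ∀ x : EuclideanSpace ℝ (Fin d), ‖ext x‖ = ‖x‖ := by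
      intro x
      simp only [EuclideanSpace.norm_eq]
      congr 1
      have e1 : ∀ j : Fin n, ‖if h : (j : ℕ) < d then x ⟨j, h⟩ else 0‖ ^ 2
          = if h : (j : ℕ) < d then ‖x ⟨j, h⟩‖ ^ 2 else 0 := by
        intro j; by_cases h : (j : ℕ) < d <;> simp [h]
      rw [Finset.sum_congr rfl (fun j _ => e1 j)]
      rw [Fin.sum_univ_eq_sum_range (fun j => if h : j < d then ‖x ⟨j, h⟩‖ ^ 2 else 0) n]
      have hsub := Finset.sum_subset (Finset.range_subset_range.mpr hdn)
        (f := fun j => if h : j < d then ‖x ⟨j, h⟩‖ ^ 2 else 0)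
        (by intro j _ hj; exact dif_neg (by simpa using hj))
      rw [← hsub, ← Fin.sum_univ_eq_sum_range (fun j => if h : j < d then ‖x ⟨j, h⟩‖ ^ 2 else 0) d]
      exact Finset.sum_congr rfl fun i _ => dif_pos i.isLt
    have hqd : (q i) - (q j) = ext (u i - u j) := by
      apply PiLp.ext; intro jj
      by_cases h : (jj : ℕ) < d <;> simp [hq, hext, h, Pi.sub_apply]
    have h2 : ‖q i - q j‖ = ‖u i - u j‖ := by rw [hqd]; exact key _
    rw [dist_eq_norm, h2]
    have h3 : u i - u j = b.repr (⟨v i - v j, sub_mem (hmem i) (hmem j)⟩ : W) := by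
      simp only [hu]
      rw [← map_sub]
      rfl
    rw [h3, LinearIsometryEquiv.norm_map, Submodule.coe_norm, dist_eq_norm]
    show ‖(p i - p i₀) - (p j - p i₀)‖ = _
    congr 1
    abel

/-- Distance bound along a walk. -/
lemma walk_dist_le {n : ℕ} {G : SimpleGraph (Fin n)} (q : Fin n → EuclideanSpace ℝ (Fin n)) {C : ℝ}
    (h : ∀ u v, G.Adj u v → dist (q u) (q v) ≤ C) :
    ∀ {a b : Fin n} (w : G.Walk a b), dist (q a) (q b) ≤ w.length * C := by
  intro a b w
  induction w with
  | nil => simp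
  | @cons a b c hadj w ih =>
      calc dist (q a) (q c) ≤ dist (q a) (q b) + dist (q b) (q c) := dist_triangle _ _ _
        _ ≤ C + w.length * C := add_le_add (h _ _ hadj) ih
        _ = ((SimpleGraph.Walk.cons hadj w).length : ℝ) * C := by
              rw [SimpleGraph.Walk.length_cons]; push_cast; ring

/-- `D` is a Euclidean distance matrix: it is realized by points in some
Euclidean space. -/
def IsEDM {n : ℕ} (D : Matrix (Fin n) (Fin n) ℝ) : Prop :=
  ∃ (k : ℕ) (p : Fin n → EuclideanSpace ℝ (Fin k)), ∀ i j, D i j = dist (p i) (p j) ^ 2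

/-- The projection of the cone of `n × n` Euclidean distance matrices onto any
subset `E` of off-diagonal entries is a closed subset of `ℝ^E`. -/
theorem edm_projection_closed {n : ℕ} (E : Set (Fin n × Fin n))
    (hE : ∀ e ∈ E, e.1 ≠ e.2) :
    IsClosed ((fun (D : Matrix (Fin n) (Fin n) ℝ) (e : E) => D e.val.1 e.val.2) ''
      {D | IsEDM D}) := by
  classical
  set g : (Fin n → EuclideanSpace ℝ (Fin n)) → (↥E → ℝ) :=
    fun q e => dist (q e.val.1) (q e.val.2) ^ 2 with hg
  have himg : ((fun (D : Matrix (Fin n) (Fin n) ℝ) (e : E) => D e.val.1 e.val.2) ''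
      {D | IsEDM D}) = Set.range g := by
    apply Set.Subset.antisymm
    · rintro _ ⟨D, ⟨k, p, hp⟩, rfl⟩
      obtain ⟨q, hq⟩ := exists_config_embed p
      exact ⟨q, by funext e; simp [hg, hq, hp]⟩
    · rintro _ ⟨q, rfl⟩
      exact ⟨fun i j => dist (q i) (q j) ^ 2, ⟨n, q, fun i j => rfl⟩, rfl⟩
  rw [himg]
  have hgcont : Continuous g := by
    apply continuous_pi
    intro e
    exact ((continuous_apply e.val.1).dist (continuous_apply e.val.2)).pow 2
  apply IsSeqClosed.isClosed
  intro y x hy hx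
  choose p hp using hy
  -- eventual uniform bound on coordinates
  have hbe : ∀ e : ↥E, ∀ᶠ m in Filter.atTop, dist (y m e) (x e) ≤ 1 := by
    intro e
    have ht : Filter.Tendsto (fun m => y m e) Filter.atTop (nhds (x e)) :=
      ((continuous_apply e).tendsto x).comp hx
    filter_upwards [ht (Metric.closedBall_mem_nhds (x e) zero_lt_one)] with m hm
    simpa [Metric.mem_closedBall] using hm
  obtain ⟨N, hN⟩ := Filter.eventually_atTop.1 (Filter.eventually_all.2 hbe)
  set p' : ℕ → Fin n → EuclideanSpace ℝ (Fin n) := fun m => p (m + N) with hp'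
  set y' : ℕ → ↥E → ℝ := fun m => y (m + N) with hy'
  have hgp : ∀ m, g (p' m) = y' m := fun m => hp (m + N)
  have hylim : Filter.Tendsto y' Filter.atTop (nhds x) :=
    hx.comp (Filter.tendsto_add_atTop_nat N)
  have hyb : ∀ m (e : ↥E), y' m e ≤ x e + 1 := by
    intro m e
    have h1 := hN (m + N) (Nat.le_add_left N m) e
    rw [Real.dist_eq, abs_le] at h1
    linarith [h1.1]
  obtain ⟨M, hM⟩ := Finite.exists_le fun e : ↥E => x e
  set C : ℝ := Real.sqrt (M + 1) with hC
  have hC0 : 0 ≤ C := Real.sqrt_nonneg _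
  set G : SimpleGraph (Fin n) := SimpleGraph.fromRel (fun a c => (a, c) ∈ E) with hGdef
  have hadjC : ∀ m u v, G.Adj u v → dist (p' m u) (p' m v) ≤ C := by
    intro m u v huv
    rw [hGdef, SimpleGraph.fromRel_adj] at huv
    have key : ∀ (e : ↥E), (e.val = (u, v) ∨ e.val = (v, u)) →
        dist (p' m u) (p' m v) ≤ C := by
      intro e he
      have hsq : dist (p' m u) (p' m v) ^ 2 = y' m e := by
        rw [← hgp m]
        rcases he with he | he <;> simp [hg, he, dist_comm]
      have h2 : dist (p' m u) (p' m v) ^ 2 ≤ M + 1 := by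
        rw [hsq]; linarith [hyb m e, hM e]
      calc dist (p' m u) (p' m v)
          = Real.sqrt (dist (p' m u) (p' m v) ^ 2) := by
            rw [Real.sqrt_sq dist_nonneg]
        _ ≤ C := Real.sqrt_le_sqrt h2
    rcases huv.2 with h1 | h1
    · exact key ⟨(u, v), h1⟩ (Or.inl rfl)
    · exact key ⟨(v, u), h1⟩ (Or.inr rfl)
  set rep : Fin n → Fin n := fun i => (G.connectedComponentMk i).out with hrep
  have hreach : ∀ i, G.Reachable i (rep i) := by
    intro i
    apply SimpleGraph.ConnectedComponent.exact
    exact ((G.connectedComponentMk i).out_eq).symm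
  have hrepE : ∀ e ∈ E, rep e.1 = rep e.2 := by
    intro e he
    have hadj : G.Adj e.1 e.2 := by
      rw [hGdef, SimpleGraph.fromRel_adj]
      exact ⟨hE e he, Or.inl he⟩
    have : G.connectedComponentMk e.1 = G.connectedComponentMk e.2 :=
      SimpleGraph.ConnectedComponent.sound hadj.reachable
    rw [hrep]
    simp only [this]
  set q' : ℕ → Fin n → EuclideanSpace ℝ (Fin n) :=
    fun m i => p' m i - p' m (rep i) with hq'
  have hgq : ∀ m, g (q' m) = y' m := by
    intro m
    rw [← hgp m]
    funext e
    have h1 : rep e.val.1 = rep e.val.2 := hrepE e.val e.prop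
    have h2 : q' m e.val.1 - q' m e.val.2 = p' m e.val.1 - p' m e.val.2 := by
      rw [hq']
      simp only
      rw [h1]
      abel
    simp only [hg, dist_eq_norm, h2]
  set R : ℝ := n * C with hR
  have hball : ∀ m, q' m ∈ Metric.closedBall (0 : Fin n → EuclideanSpace ℝ (Fin n)) R := by
    intro m
    rw [Metric.mem_closedBall, dist_pi_le_iff (by positivity)]
    intro i
    simp only [Pi.zero_apply, dist_zero_right]
    have h1 : ‖q' m i‖ = dist (p' m i) (p' m (rep i)) := by
      rw [hq', dist_eq_norm]
    rw [h1]
    obtain ⟨w⟩ := hreach i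
    have h2 := walk_dist_le (p' m) (hadjC m) w.bypass
    have h3 : (w.bypass.length : ℝ) ≤ n := by
      have := w.bypass_isPath.length_lt
      simp only [Fintype.card_fin] at this
      exact_mod_cast this.le
    calc dist (p' m i) (p' m (rep i)) ≤ w.bypass.length * C := h2
      _ ≤ n * C := mul_le_mul_of_nonneg_right h3 hC0
  have hcomp : IsCompact (Metric.closedBall (0 : Fin n → EuclideanSpace ℝ (Fin n)) R) :=
    isCompact_closedBall _ _
  obtain ⟨a, -, φ, hφmono, hφlim⟩ := hcomp.tendsto_subseq hball
  refine ⟨a, ?_⟩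
  have h1 : Filter.Tendsto (fun m => g (q' (φ m))) Filter.atTop (nhds (g a)) :=
    (hgcont.tendsto a).comp hφlim
  have h2 : Filter.Tendsto (fun m => g (q' (φ m))) Filter.atTop (nhds x) := by
    have he : (fun m => g (q' (φ m))) = fun m => y' (φ m) := funext fun m => hgq (φ m)
    rw [he]
    exact hylim.comp hφmono.tendsto_atTop
  exact tendsto_nhds_unique h1 h2
end

section
/- If the set L of looped vertices is disconnected from its complement L^c in the graph G (i.e., no edge of E joins a vertex of L with a vertex not in L), then the coordinate projection P(S^n_+) of the positive semidefinite cone is closed. -/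
open Matrix Filter Set Topology

lemma aux_vecMulVec_posSemidef {n : ℕ} (w : Fin n → ℝ) :
    (Matrix.vecMulVec w w).PosSemidef := by
  refine Matrix.posSemidef_iff_dotProduct_mulVec.mpr ⟨?_, ?_⟩
  · ext i j
    simp [Matrix.conjTranspose_apply, Matrix.vecMulVec_apply, mul_comm]
  · intro x
    have h : Matrix.vecMulVec w w *ᵥ x = (∑ j, w j * x j) • w := by
      funext i
      simp only [Matrix.mulVec, dotProduct, Matrix.vecMulVec_apply, Pi.smul_apply,
        smul_eq_mul, Finset.sum_mul]
      exact Finset.sum_congr rfl fun j _ => by ring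
    rw [h, star_trivial, dotProduct_smul]
    have h2 : x ⬝ᵥ w = ∑ j, w j * x j := by
      simp only [dotProduct]; exact Finset.sum_congr rfl fun j _ => mul_comm _ _
    rw [smul_eq_mul, h2]
    exact mul_self_nonneg _

lemma aux_psd_symm {n : ℕ} {X : Matrix (Fin n) (Fin n) ℝ} (hX : X.PosSemidef) (i j : Fin n) :
    X j i = X i j := by
  have := congrFun (congrFun hX.1 i) j
  simpa [Matrix.conjTranspose_apply] using this

lemma aux_psd_abs_le {n : ℕ} {X : Matrix (Fin n) (Fin n) ℝ} (hX : X.PosSemidef) (i j : Fin n) :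
    |X i j| ≤ (X i i + X j j) / 2 := by
  have key : ∀ s : ℝ, 0 ≤ X i i + s * X i j + s * X j i + s * s * X j j := by
    intro s
    have h := hX.dotProduct_mulVec_nonneg ((Pi.single i 1 : Fin n → ℝ) + s • (Pi.single j 1 : Fin n → ℝ))
    simp only [star_trivial, Matrix.mulVec_add, Matrix.mulVec_smul, Matrix.mulVec_single,
      add_dotProduct, smul_dotProduct, dotProduct_add,
      dotProduct_smul, single_dotProduct, smul_eq_mul, mul_one,
      Pi.add_apply, Pi.smul_apply] at h
    simp only [Matrix.col_apply, op_smul_eq_mul, one_mul, mul_one] at h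
    linarith
  have h1 := key 1
  have h2 := key (-1)
  have hs := aux_psd_symm hX i j
  rw [abs_le]
  constructor <;> nlinarith [h1, h2]

lemma aux_tendsto_quadform {n : ℕ} {M : ℕ → Matrix (Fin n) (Fin n) ℝ}
    {W : Matrix (Fin n) (Fin n) ℝ}
    (h : ∀ i j, Tendsto (fun k => M k i j) atTop (𝓝 (W i j))) (x : Fin n → ℝ) :
    Tendsto (fun k => x ⬝ᵥ (M k *ᵥ x)) atTop (𝓝 (x ⬝ᵥ (W *ᵥ x))) := by
  simp only [dotProduct, Matrix.mulVec]
  exact tendsto_finset_sum _ fun i _ =>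
    (tendsto_finset_sum _ fun j _ => ((h i j).mul_const (x j))).const_mul (x i)

/-- If the set `L` of looped vertices is disconnected from its complement in the graph
`G = (V, E)` (no edge of `E` joins a vertex of `L` with a vertex not in `L`), then the
coordinate projection of the positive semidefinite cone onto the entries indexed by `E`
is closed. -/
theorem psd_projection_closed_of_disconnected {n : ℕ} (E : Set (Fin n × Fin n))
    (hdis : ∀ i j : Fin n, (i, j) ∈ E → ((i, i) ∈ E ↔ (j, j) ∈ E)) :
    IsClosed ((fun (X : Matrix (Fin n) (Fin n) ℝ) (e : E) => X e.val.1 e.val.2) ''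
      {X | X.PosSemidef}) := by
  classical
  haveI : Fintype (↥E) := Fintype.ofFinite _
  rw [← isSeqClosed_iff_isClosed]
  intro y p hy hyp
  choose X hXpsd hXy using hy
  -- entrywise limits of y
  have hcoord : ∀ e : E, Tendsto (fun k => y k e) atTop (𝓝 (p e)) := fun e =>
    tendsto_pi_nhds.1 hyp e
  have hXyval : ∀ k (e : E), X k e.val.1 e.val.2 = y k e := fun k e =>
    congrFun (hXy k) e
  -- symmetry of p on double edges
  have hpsymm : ∀ (i j : Fin n) (h1 : (i, j) ∈ E) (h2 : (j, i) ∈ E),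
      p ⟨(j, i), h2⟩ = p ⟨(i, j), h1⟩ := by
    intro i j h1 h2
    refine tendsto_nhds_unique (hcoord ⟨(j, i), h2⟩) ?_
    have heq : (fun k => y k ⟨(j, i), h2⟩) = fun k => y k ⟨(i, j), h1⟩ := by
      funext k
      rw [← hXyval k ⟨(j, i), h2⟩, ← hXyval k ⟨(i, j), h1⟩]
      exact aux_psd_symm (hXpsd k) i j
    rw [heq]
    exact hcoord ⟨(i, j), h1⟩
  -- bounds on looped diagonals
  have hbound : ∀ i : Fin n, ∃ B : ℝ, ∀ k, (if (i, i) ∈ E then X k i i else 0) ≤ B := by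
    intro i
    by_cases h : (i, i) ∈ E
    · have ht : Tendsto (fun k => X k i i) atTop (𝓝 (p ⟨(i, i), h⟩)) := by
        have : (fun k => X k i i) = fun k => y k ⟨(i, i), h⟩ := by
          funext k; exact hXyval k ⟨(i, i), h⟩
        rw [this]; exact hcoord ⟨(i, i), h⟩
      obtain ⟨B, hB⟩ := ht.bddAbove_range
      exact ⟨B, fun k => by simpa [h] using hB ⟨k, rfl⟩⟩
    · exact ⟨0, fun k => by simp [h]⟩
  choose B hB using hbound
  set C : ℝ := ∑ i, max (B i) 0 with hC
  have hCi : ∀ i, B i ≤ C := fun i =>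
    le_trans (le_max_left _ _)
      (Finset.single_le_sum (f := fun i => max (B i) 0) (fun _ _ => le_max_right _ _)
        (Finset.mem_univ i))
  have hC0 : 0 ≤ C := Finset.sum_nonneg fun _ _ => le_max_right _ _
  have hXdiag : ∀ k i, (i, i) ∈ E → X k i i ≤ C := by
    intro k i h
    have := hB i k
    rw [if_pos h] at this
    exact this.trans (hCi i)
  -- the compressed matrices
  set d : Fin n → ℝ := fun i => if (i, i) ∈ E then 1 else 0 with hd
  set Z : ℕ → Matrix (Fin n) (Fin n) ℝ := fun k => Matrix.of fun i j => d i * X k i j * d j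
    with hZ
  have hZpsd : ∀ k, (Z k).PosSemidef := by
    intro k
    have h1 : Z k = (Matrix.diagonal d)ᴴ * X k * Matrix.diagonal d := by
      ext i j
      simp [hZ, Matrix.diagonal_conjTranspose, Matrix.diagonal_mul, Matrix.mul_diagonal,
        mul_comm, mul_assoc, mul_left_comm]
    rw [h1]
    exact (hXpsd k).conjTranspose_mul_mul_same _
  have hZmem : ∀ k i j, Z k i j ∈ Set.Icc (-C) C := by
    intro k i j
    by_cases hi : (i, i) ∈ E <;> by_cases hj : (j, j) ∈ E
    · have habs := aux_psd_abs_le (hXpsd k) i j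
      have h1 : X k i i ≤ C := hXdiag k i hi
      have h2 : X k j j ≤ C := hXdiag k j hj
      have : |X k i j| ≤ C := habs.trans (by linarith)
      have hZe : Z k i j = X k i j := by simp [hZ, hd, hi, hj]
      rw [hZe]
      exact abs_le.1 this
    all_goals
      have hZe : Z k i j = 0 := by simp [hZ, hd, hi, hj]
      rw [hZe]
      constructor <;> linarith
  -- extract convergent subsequence in the Pi type
  have hKcomp : IsCompact (Set.pi Set.univ fun _ : Fin n =>
      Set.pi Set.univ fun _ : Fin n => Set.Icc (-C) C) :=
    isCompact_univ_pi fun _ => isCompact_univ_pi fun _ => isCompact_Icc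
  obtain ⟨W, -, φ, hφ, hWlim⟩ :=
    hKcomp.tendsto_subseq (x := fun k (i j : Fin n) => Z k i j)
      (fun k => Set.mem_univ_pi.2 fun i => Set.mem_univ_pi.2 fun j => hZmem k i j)
  have hWe : ∀ i j, Tendsto (fun k => Z (φ k) i j) atTop (𝓝 (W i j)) := by
    intro i j
    have h1 := tendsto_pi_nhds.1 hWlim i
    exact tendsto_pi_nhds.1 h1 j
  set Wm : Matrix (Fin n) (Fin n) ℝ := Matrix.of W with hWm
  have hWpsd : Wm.PosSemidef := by
    refine Matrix.posSemidef_iff_dotProduct_mulVec.mpr ⟨?_, ?_⟩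
    · ext i j
      have h1 : Tendsto (fun k => Z (φ k) j i) atTop (𝓝 (W j i)) := hWe j i
      have h2 : (fun k => Z (φ k) j i) = fun k => Z (φ k) i j := by
        funext k; exact aux_psd_symm (hZpsd (φ k)) i j
      rw [h2] at h1
      have := tendsto_nhds_unique h1 (hWe i j)
      simpa [hWm, Matrix.conjTranspose_apply] using this
    · intro x
      rw [star_trivial]
      have hten := aux_tendsto_quadform (M := fun k => Z (φ k)) (W := Wm) (fun i j => hWe i j) x
      refine ge_of_tendsto hten (Filter.Eventually.of_forall fun k => ?_)
      simpa [star_trivial] using (hZpsd (φ k)).dotProduct_mulVec_nonneg x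
  -- limit identification on edges between looped vertices
  have hWedge : ∀ (e : ↥E), (e.val.1, e.val.1) ∈ E → Wm e.val.1 e.val.2 = p e := by
    intro e hloop
    refine tendsto_nhds_unique ?_ ((hcoord e).comp hφ.tendsto_atTop)
    have hjloop : (e.val.2, e.val.2) ∈ E := (hdis e.val.1 e.val.2 e.property).1 hloop
    have heq : ∀ k, Z (φ k) e.val.1 e.val.2 = y (φ k) e := by
      intro k
      rw [← hXyval (φ k) e]
      simp [hZ, hd, hloop, hjloop]
    have := hWe e.val.1 e.val.2
    simpa [heq, hWm, Function.comp_def] using this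
  have hWzero : ∀ i j : Fin n, (i, i) ∉ E → Wm i j = 0 := by
    intro i j hi
    have heq : ∀ k, Z (φ k) i j = 0 := by intro k; simp [hZ, hd, hi]
    have h2 : Tendsto (fun k => Z (φ k) i j) atTop (𝓝 (0:ℝ)) := by
      simp only [heq]; exact tendsto_const_nhds
    exact tendsto_nhds_unique (hWe i j) h2
  -- the correction matrix supported on loopless vertices
  set P : Finset (Fin n × Fin n) :=
    Finset.univ.filter fun q => (q ∈ E ∨ Prod.swap q ∈ E) ∧ (q.1, q.1) ∉ E ∧ q.1 < q.2 with hP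
  set v : Fin n × Fin n → ℝ := fun q =>
    if h : q ∈ E then p ⟨q, h⟩ else if h' : Prod.swap q ∈ E then p ⟨Prod.swap q, h'⟩ else 0
    with hv
  set w : Fin n × Fin n → Fin n → ℝ := fun q i =>
    if i = q.1 then v q else if i = q.2 then 1 else 0 with hw
  set T : Matrix (Fin n) (Fin n) ℝ := ∑ q ∈ P, Matrix.vecMulVec (w q) (w q) with hT
  have hTpsd : T.PosSemidef :=
    Finset.sum_induction _ _ (fun a b ha hb => ha.add hb) Matrix.PosSemidef.zero
      (fun q _ => aux_vecMulVec_posSemidef (w q))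
  -- loopless endpoints of pairs in P
  have hPloop : ∀ q ∈ P, (q.1, q.1) ∉ E ∧ (q.2, q.2) ∉ E ∧ q.1 < q.2 := by
    intro q hq
    rw [hP, Finset.mem_filter] at hq
    obtain ⟨-, hmem, h1, hlt⟩ := hq
    refine ⟨h1, ?_, hlt⟩
    rcases hmem with hm | hm
    · intro h2; exact h1 ((hdis q.1 q.2 hm).2 h2)
    · intro h2; exact h1 ((hdis q.2 q.1 hm).1 h2)
  refine ⟨Wm + T, hWpsd.add hTpsd, ?_⟩
  funext e
  obtain ⟨⟨i, j⟩, he⟩ := e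
  simp only [Matrix.add_apply]
  have hTapply : T i j = ∑ q ∈ P, w q i * w q j := by
    rw [hT, Matrix.sum_apply]
    exact Finset.sum_congr rfl fun q _ => Matrix.vecMulVec_apply _ _ _ _
  by_cases hi : (i, i) ∈ E
  · -- looped case : T part vanishes
    have hj : (j, j) ∈ E := (hdis i j he).1 hi
    have hT0 : T i j = 0 := by
      rw [hTapply]
      refine Finset.sum_eq_zero fun q hq => ?_
      obtain ⟨h1, h2, -⟩ := hPloop q hq
      have hwi : w q i = 0 := by
        have e1 : i ≠ q.1 := fun h => h1 (h ▸ hi)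
        have e2 : i ≠ q.2 := fun h => h2 (h ▸ hi)
        simp only [hw, if_neg e1, if_neg e2]
      rw [hwi, zero_mul]
    rw [hT0, add_zero]
    exact hWedge ⟨(i, j), he⟩ hi
  · -- loopless case : W part vanishes
    have hj : (j, j) ∉ E := fun h => hi ((hdis i j he).2 h)
    have hij : i ≠ j := fun h => hi (h ▸ he)
    rw [hWzero i j hi, zero_add, hTapply]
    rcases lt_or_gt_of_ne hij with hlt | hgt
    · -- i < j : the pair (i,j) itself is in P
      have hq0 : ((i, j) : Fin n × Fin n) ∈ P := by
        rw [hP, Finset.mem_filter]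
        exact ⟨Finset.mem_univ _, Or.inl he, hi, hlt⟩
      rw [Finset.sum_eq_single ((i, j) : Fin n × Fin n)]
      · have hterm : w (i, j) i * w (i, j) j = v (i, j) := by
          simp [hw, Ne.symm hij]
        rw [hterm]
        simp only [hv]
        rw [dif_pos he]
      · intro q hq hne
        obtain ⟨-, -, hqlt⟩ := hPloop q hq
        simp only [hw]
        by_cases hi1 : i = q.1
        · by_cases hj1 : j = q.1
          · exact absurd (hi1.trans hj1.symm) hij
          · by_cases hj2 : j = q.2
            · exact absurd (Prod.ext hi1.symm hj2.symm) hne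
            · rw [if_neg hj1, if_neg hj2, mul_zero]
        · by_cases hi2 : i = q.2
          · by_cases hj1 : j = q.1
            · exfalso
              rw [← hj1] at hqlt
              rw [← hi2] at hqlt
              exact absurd (hlt.trans hqlt) (lt_irrefl _)
            · by_cases hj2 : j = q.2
              · exact absurd (hi2.trans hj2.symm) hij
              · rw [if_neg hj1, if_neg hj2, mul_zero]
          · rw [if_neg hi1, if_neg hi2, zero_mul]
      · intro h; exact absurd hq0 h
    · -- j < i : the pair (j,i) is in P
      have hq0 : ((j, i) : Fin n × Fin n) ∈ P := by
        rw [hP, Finset.mem_filter]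
        exact ⟨Finset.mem_univ _, Or.inr he, hj, hgt⟩
      rw [Finset.sum_eq_single ((j, i) : Fin n × Fin n)]
      · have hterm : w (j, i) i * w (j, i) j = v (j, i) := by
          simp [hw, hij]
        rw [hterm]
        by_cases hji : (j, i) ∈ E
        · simp only [hv]
          rw [dif_pos hji]
          exact hpsymm i j he hji
        · simp only [hv]
          rw [dif_neg hji, dif_pos (show Prod.swap (j, i) ∈ E from he)]
          rfl
      · intro q hq hne
        obtain ⟨-, -, hqlt⟩ := hPloop q hq
        simp only [hw]
        by_cases hi1 : i = q.1
        · by_cases hj1 : j = q.1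
          · exact absurd (hi1.trans hj1.symm) hij
          · by_cases hj2 : j = q.2
            · exfalso
              rw [← hi1, ← hj2] at hqlt
              exact absurd (hgt.trans hqlt) (lt_irrefl _)
            · rw [if_neg hj1, if_neg hj2, mul_zero]
        · by_cases hi2 : i = q.2
          · by_cases hj1 : j = q.1
            · exact absurd (Prod.ext hj1.symm hi2.symm) hne
            · by_cases hj2 : j = q.2
              · exact absurd (hi2.trans hj2.symm) hij
              · rw [if_neg hj1, if_neg hj2, mul_zero]
          · rw [if_neg hi1, if_neg hi2, zero_mul]
      · intro h; exact absurd hq0 h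
end

section
/- The restriction of K to the centered matrices S_c is a linear isomorphism onto the hollow matrices S_H, and it maps S_c ∩ S^n_+ onto the cone E^n of Euclidean distance matrices. -/
open Finset in
private lemma gram_psd {n k : ℕ} (q : Fin n → EuclideanSpace ℝ (Fin k)) :
    (Matrix.of fun i j => (inner ℝ (q i) (q j) : ℝ)).PosSemidef := by
  refine Matrix.PosSemidef.of_dotProduct_mulVec_nonneg ?_ ?_
  · ext i j
    simp only [Matrix.conjTranspose_apply, Matrix.of_apply, star_trivial]
    exact real_inner_comm _ _
  · intro x
    have key : (dotProduct (star x)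
        ((Matrix.of fun i j => (inner ℝ (q i) (q j) : ℝ)).mulVec x))
        = (inner ℝ (∑ i, x i • q i) (∑ j, x j • q j) : ℝ) := by
      simp [dotProduct, Matrix.mulVec, inner_sum, sum_inner,
        real_inner_smul_left, real_inner_smul_right, Finset.mul_sum, mul_comm, mul_left_comm]
      rw [← real_inner_self_eq_norm_sq, sum_inner]
      simp only [inner_sum, real_inner_smul_left, real_inner_smul_right, Finset.mul_sum]
      exact Finset.sum_congr rfl fun _ _ => Finset.sum_congr rfl fun _ _ => mul_left_comm _ _ _
    rw [key]
    exact real_inner_self_nonneg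

private lemma dist_sq_eq {k : ℕ} (x y : EuclideanSpace ℝ (Fin k)) :
    dist x y ^ 2 = (inner ℝ x x : ℝ) + (inner ℝ y y : ℝ) - 2 * (inner ℝ x y : ℝ) := by
  rw [dist_eq_norm, norm_sub_sq_real, real_inner_self_eq_norm_sq, real_inner_self_eq_norm_sq]
  ring

/-- The map `K(X)_{ij} = X_{ii} + X_{jj} - 2 X_{ij}`. -/

def Kmap {n : ℕ} (X : Matrix (Fin n) (Fin n) ℝ) : Matrix (Fin n) (Fin n) ℝ :=
  Matrix.of fun i j => X i i + X j j - 2 * X i j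

/-- The restriction of `K` to the centered symmetric matrices `S_c` is a linear
isomorphism (i.e. a bijection) onto the hollow symmetric matrices `S_H`, and it maps
`S_c ∩ S^n₊` onto the cone of Euclidean distance matrices. -/
theorem K_isomorphism {n : ℕ} :
    (∀ X Y : Matrix (Fin n) (Fin n) ℝ,
        X.IsSymm → X.mulVec (fun _ => (1 : ℝ)) = 0 →
        Y.IsSymm → Y.mulVec (fun _ => (1 : ℝ)) = 0 →
        Kmap X = Kmap Y → X = Y) ∧
    (∀ D : Matrix (Fin n) (Fin n) ℝ, D.IsSymm → (∀ i, D i i = 0) →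
        ∃ X : Matrix (Fin n) (Fin n) ℝ, X.IsSymm ∧ X.mulVec (fun _ => (1 : ℝ)) = 0 ∧
          Kmap X = D) ∧
    (Kmap '' {X : Matrix (Fin n) (Fin n) ℝ | X.PosSemidef ∧
        X.mulVec (fun _ => (1 : ℝ)) = 0}
      = {D : Matrix (Fin n) (Fin n) ℝ | IsEDM D}) := by
  refine ⟨?_, ?_, ?_⟩
  · intro X Y hXs hX1 hYs hY1 hK
    rcases Nat.eq_zero_or_pos n with hn | hn
    · subst hn; ext i j; exact i.elim0
    have hnR : (n : ℝ) ≠ 0 := Nat.cast_ne_zero.mpr hn.ne'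
    have hK' : ∀ i j, X i i + X j j - 2 * X i j = Y i i + Y j j - 2 * Y i j :=
      fun i j => congrFun (congrFun hK i) j
    have hrX : ∀ i, ∑ j, X i j = 0 := by
      intro i; have := congrFun hX1 i
      simpa [Matrix.mulVec, dotProduct] using this
    have hrY : ∀ i, ∑ j, Y i j = 0 := by
      intro i; have := congrFun hY1 i
      simpa [Matrix.mulVec, dotProduct] using this
    have h1 : ∀ i, (n : ℝ) * X i i + (∑ k, X k k) = (n : ℝ) * Y i i + (∑ k, Y k k) := by
      intro i
      have hs : ∑ j, (X i i + X j j - 2 * X i j) = ∑ j, (Y i i + Y j j - 2 * Y i j) :=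
        Finset.sum_congr rfl (fun j _ => hK' i j)
      have eX : ∑ j, (X i i + X j j - 2 * X i j) = (n : ℝ) * X i i + (∑ k, X k k) := by
        simp [Finset.sum_sub_distrib, Finset.sum_add_distrib, ← Finset.mul_sum, hrX i,
          Finset.sum_const, nsmul_eq_mul]
      have eY : ∑ j, (Y i i + Y j j - 2 * Y i j) = (n : ℝ) * Y i i + (∑ k, Y k k) := by
        simp [Finset.sum_sub_distrib, Finset.sum_add_distrib, ← Finset.mul_sum, hrY i,
          Finset.sum_const, nsmul_eq_mul]
      rw [← eX, ← eY]; exact hs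
    have htr : (∑ k, X k k) = (∑ k, Y k k) := by
      have hs := Finset.sum_congr rfl (fun i (_ : i ∈ Finset.univ) => h1 i)
      simp only [Finset.sum_add_distrib, ← Finset.mul_sum, Finset.sum_const,
        Finset.card_univ, Fintype.card_fin, nsmul_eq_mul] at hs
      have h2 : (n : ℝ) * (∑ k, X k k) = (n : ℝ) * (∑ k, Y k k) := by linarith
      exact mul_left_cancel₀ hnR h2
    have hdiag : ∀ i, X i i = Y i i := by
      intro i
      have := h1 i
      rw [htr] at this
      have : (n : ℝ) * X i i = (n : ℝ) * Y i i := by linarith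
      exact mul_left_cancel₀ hnR this
    ext i j
    have := hK' i j
    rw [hdiag i, hdiag j] at this
    linarith
  · intro D hDs hD0
    set r : Fin n → ℝ := fun i => (∑ j, D i j) / n with hr
    set m : ℝ := (∑ i, ∑ j, D i j) / (n^2 : ℝ) with hm
    refine ⟨Matrix.of fun i j => -(1/2) * (D i j - r i - r j + m), ?_, ?_, ?_⟩
    · ext i j
      simp only [Matrix.transpose_apply, Matrix.of_apply]
      rw [hDs.apply i j]
      ring
    · rcases Nat.eq_zero_or_pos n with hn | hn
      · subst hn; funext i; exact i.elim0
      have hnR : (n : ℝ) ≠ 0 := Nat.cast_ne_zero.mpr hn.ne'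
      funext i
      have h1 : ∑ j, r j = (n : ℝ) * m := by
        simp only [hr, hm]
        rw [← Finset.sum_div]
        field_simp
      have h2 : ∑ j, D i j = (n : ℝ) * r i := by
        rw [hr]; field_simp
      simp only [Matrix.mulVec, dotProduct, Matrix.of_apply, mul_one, Pi.zero_apply]
      rw [← Finset.mul_sum]
      have expand : ∑ j, (D i j - r i - r j + m) = 0 := by
        simp only [Finset.sum_add_distrib, Finset.sum_sub_distrib, Finset.sum_const,
          Finset.card_univ, Fintype.card_fin, nsmul_eq_mul]
        rw [h1, h2]
        ring
      rw [expand, mul_zero]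
    · ext i j
      simp only [Kmap, Matrix.of_apply]
      have h0i := hD0 i
      have h0j := hD0 j
      have hs := hDs.apply i j
      -- entries: X i i = -(1/2)*(D i i - 2 r i + m) etc.
      ring_nf
      nlinarith [h0i, h0j, hs]
  · apply Set.Subset.antisymm
    · rintro D ⟨X, ⟨hX, hX1⟩, rfl⟩
      classical
      open scoped MatrixOrder in
      set s := CFC.sqrt X with hsdef
      open scoped MatrixOrder in
      have hs2 : s * s = X := by
        have := CFC.sq_sqrt X (Matrix.nonneg_iff_posSemidef.mpr hX); rwa [sq] at this
      open scoped MatrixOrder in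
      have hsym : ∀ a b, s a b = s b a := by
        intro a b
        have h := (Matrix.nonneg_iff_posSemidef.mp (CFC.sqrt_nonneg X)).1
        have := congrFun (congrFun h a) b
        simpa [Matrix.conjTranspose_apply] using this.symm
      set pv : Fin n → EuclideanSpace ℝ (Fin n) :=
        fun i => (WithLp.equiv 2 (Fin n → ℝ)).symm (fun k => s k i) with hpv
      refine ⟨n, pv, ?_⟩
      intro i j
      have hinner : ∀ a b : Fin n, (inner ℝ (pv a) (pv b) : ℝ) = X a b := by
        intro a b
        rw [← hs2, Matrix.mul_apply, PiLp.inner_apply]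
        simp only [hpv, RCLike.inner_apply, conj_trivial, WithLp.equiv_symm_apply, WithLp.ofLp_toLp]
        exact Finset.sum_congr rfl fun k _ => by rw [hsym k a, mul_comm]
      rw [dist_sq_eq, hinner, hinner, hinner]
      simp [Kmap]
    · rintro D ⟨k, p, hp⟩
      classical
      set c : EuclideanSpace ℝ (Fin k) := (n : ℝ)⁻¹ • ∑ j, p j with hc
      set q : Fin n → EuclideanSpace ℝ (Fin k) := fun i => p i - c with hq
      refine ⟨Matrix.of fun i j => (inner ℝ (q i) (q j) : ℝ), ⟨gram_psd q, ?_⟩, ?_⟩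
      · rcases Nat.eq_zero_or_pos n with hn | hn
        · subst hn; funext i; exact i.elim0
        have hnR : (n : ℝ) ≠ 0 := Nat.cast_ne_zero.mpr hn.ne'
        funext i
        have hsum : (∑ j, q j) = 0 := by
          simp only [hq, Finset.sum_sub_distrib, Finset.sum_const, Finset.card_univ,
            Fintype.card_fin, hc, smul_smul]
          rw [← Nat.cast_smul_eq_nsmul ℝ]
          rw [smul_smul, mul_inv_cancel₀ hnR, one_smul, sub_self]
        simp only [Matrix.mulVec, dotProduct, Matrix.of_apply, mul_one, Pi.zero_apply]
        rw [← inner_sum, hsum, inner_zero_right]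
      · ext i j
        have hqq : q i - q j = p i - p j := by
          simp [hq, sub_sub_sub_cancel_right]
        have : dist (q i) (q j) = dist (p i) (p j) := by
          rw [dist_eq_norm, dist_eq_norm, hqq]
        simp only [Kmap, Matrix.of_apply]
        rw [show (inner ℝ (q i) (q i) : ℝ) + (inner ℝ (q j) (q j) : ℝ) - 2 * (inner ℝ (q i) (q j) : ℝ)
            = dist (q i) (q j) ^ 2 from (dist_sq_eq _ _).symm, this, hp]
end

section
/- S_c ∩ S^n_+ is a face of S^n_+, and for any n×n orthogonal matrix whose first column is e/√n with remaining columns forming the n×(n−1) matrix U, one has S_c ∩ S^n_+ = U S^{n−1}_+ U^T; in particular this face is linearly isomorphic to S^{n−1}_+. -/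
open Matrix in
private lemma psd_smul' {n : Type*} [Fintype n] {X : Matrix n n ℝ} (h : X.PosSemidef)
    {a : ℝ} (ha : 0 ≤ a) : (a • X).PosSemidef := by
  refine Matrix.PosSemidef.of_dotProduct_mulVec_nonneg ?_ (fun x => ?_)
  · unfold Matrix.IsHermitian
    rw [conjTranspose_smul, h.1.eq]
    simp
  · have := h.dotProduct_mulVec_nonneg x
    simp only [Matrix.smul_mulVec, dotProduct_smul, smul_eq_mul] at *
    positivity


/-- `F` is a face of the convex set `C`: a convex subset of `C` containing every line
segment of `C` whose relative interior meets it. -/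
def IsFaceOf {M : Type*} [AddCommGroup M] [Module ℝ M] (F C : Set M) : Prop :=
  F ⊆ C ∧ Convex ℝ F ∧ ∀ x ∈ C, ∀ y ∈ C, ∀ t : ℝ, t ∈ Set.Ioo (0 : ℝ) 1 →
    t • x + (1 - t) • y ∈ F → x ∈ F ∧ y ∈ F

/-- `S_c ∩ S^n₊` is a face of `S^n₊`, and for any orthogonal matrix whose first column
is `e/√n`, with `U` the matrix of remaining columns, one has
`S_c ∩ S^n₊ = U S^{n-1}₊ Uᵀ`; in particular this face is linearly isomorphic to
`S^{n-1}₊`. -/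
theorem centered_psd_face {m : ℕ} (W : Matrix (Fin (m + 1)) (Fin (m + 1)) ℝ)
    (hW : W ∈ Matrix.orthogonalGroup (Fin (m + 1)) ℝ)
    (hcol : ∀ i, W i 0 = 1 / Real.sqrt (m + 1)) :
    IsFaceOf {X : Matrix (Fin (m + 1)) (Fin (m + 1)) ℝ | X.PosSemidef ∧
        X.mulVec (fun _ => (1 : ℝ)) = 0}
      {X : Matrix (Fin (m + 1)) (Fin (m + 1)) ℝ | X.PosSemidef} ∧
    {X : Matrix (Fin (m + 1)) (Fin (m + 1)) ℝ | X.PosSemidef ∧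
        X.mulVec (fun _ => (1 : ℝ)) = 0}
      = {X : Matrix (Fin (m + 1)) (Fin (m + 1)) ℝ |
          ∃ A : Matrix (Fin m) (Fin m) ℝ, A.PosSemidef ∧
            X = Matrix.of (fun i (j : Fin m) => W i j.succ) * A *
                  (Matrix.of (fun i (j : Fin m) => W i j.succ)).transpose} := by
  open Matrix in
  have hWtW : Wᵀ * W = 1 := by simpa using (Matrix.mem_orthogonalGroup_iff' _ _).mp hW
  have hWWt : W * Wᵀ = 1 := by simpa using (Matrix.mem_orthogonalGroup_iff _ _).mp hW
  set e : Fin (m + 1) → ℝ := fun _ => (1 : ℝ) with he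
  set U : Matrix (Fin (m + 1)) (Fin m) ℝ := Matrix.of (fun i (j : Fin m) => W i j.succ) with hUdef
  have hsqrt_pos : 0 < Real.sqrt (m + 1) := Real.sqrt_pos.mpr (by positivity)
  have hsq : ∀ i k, W i 0 * W k 0 = ((m : ℝ) + 1)⁻¹ := by
    intro i k
    rw [hcol, hcol, div_mul_div_comm, one_mul, Real.mul_self_sqrt (by positivity), one_div]
  have hUH : Uᴴ = Uᵀ := by
    ext i j; simp [Matrix.conjTranspose_apply]
  -- quadratic form helpers
  have hquad : ∀ {X : Matrix (Fin (m + 1)) (Fin (m + 1)) ℝ}, X.PosSemidef →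
      (X *ᵥ e = 0 ↔ e ⬝ᵥ X *ᵥ e = 0) := by
    intro X hX
    constructor
    · intro h; rw [h]; simp
    · intro h; exact (hX.dotProduct_mulVec_zero_iff e).mp (by simpa using h)
  constructor
  · refine ⟨fun X hX => hX.1, ?_, ?_⟩
    · -- convexity
      intro X hX Y hY a b ha hb hab
      simp only [Set.mem_setOf_eq] at *
      refine ⟨(psd_smul' hX.1 ha).add (psd_smul' hY.1 hb), ?_⟩
      rw [Matrix.add_mulVec, Matrix.smul_mulVec, Matrix.smul_mulVec, hX.2, hY.2]
      simp
    · intro x hx y hy t ht hmem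
      simp only [Set.mem_setOf_eq] at *
      have hxq : 0 ≤ e ⬝ᵥ x *ᵥ e := by simpa using hx.dotProduct_mulVec_nonneg e
      have hyq : 0 ≤ e ⬝ᵥ y *ᵥ e := by simpa using hy.dotProduct_mulVec_nonneg e
      have h0 : t * (e ⬝ᵥ x *ᵥ e) + (1 - t) * (e ⬝ᵥ y *ᵥ e) = 0 := by
        have := (hquad (hmem.1)).mp hmem.2
        rw [Matrix.add_mulVec, Matrix.smul_mulVec, Matrix.smul_mulVec,
          dotProduct_add, dotProduct_smul, dotProduct_smul] at this
        simpa using this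
      have ht1 : (0 : ℝ) < 1 - t := by linarith [ht.2]
      have hx0 : e ⬝ᵥ x *ᵥ e = 0 := by nlinarith [ht.1, mul_nonneg ht.1.le hxq, mul_nonneg ht1.le hyq]
      have hy0 : e ⬝ᵥ y *ᵥ e = 0 := by nlinarith [ht.1, mul_nonneg ht.1.le hxq, mul_nonneg ht1.le hyq]
      exact ⟨⟨hx, (hquad hx).mpr hx0⟩, ⟨hy, (hquad hy).mpr hy0⟩⟩
  · -- set equality
    have hUte : Uᵀ *ᵥ e = 0 := by
      ext j
      have h1 := congrFun (congrFun hWtW j.succ) 0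
      simp only [Matrix.mul_apply, Matrix.transpose_apply, Matrix.one_apply,
        Fin.succ_ne_zero, if_neg (Fin.succ_ne_zero j)] at h1
      simp only [hcol, ← Finset.sum_mul] at h1
      have hsum : (∑ i, W i j.succ) = 0 := by
        have hne : (1 : ℝ) / Real.sqrt (m + 1) ≠ 0 := by positivity
        exact (mul_eq_zero.mp h1).resolve_right hne
      simp [Matrix.mulVec, dotProduct, he, hUdef, hsum]
    set J : Matrix (Fin (m + 1)) (Fin (m + 1)) ℝ := Matrix.of (fun _ _ => (1 : ℝ)) with hJdef
    have hUUt : U * Uᵀ = 1 - ((m : ℝ) + 1)⁻¹ • J := by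
      ext i k
      have h1 := congrFun (congrFun hWWt i) k
      rw [Matrix.mul_apply, Fin.sum_univ_succ] at h1
      simp only [Matrix.transpose_apply] at h1
      simp only [Matrix.mul_apply, Matrix.transpose_apply, hUdef, hJdef, Matrix.of_apply,
        Matrix.sub_apply, Matrix.smul_apply, smul_eq_mul, mul_one]
      rw [hsq i k] at h1
      rw [Matrix.one_apply]
      rw [Matrix.one_apply] at h1
      linarith
    ext X
    simp only [Set.mem_setOf_eq]
    constructor
    · rintro ⟨hpsd, hker⟩
      refine ⟨Uᵀ * X * U, by simpa [hUH] using hpsd.conjTranspose_mul_mul_same U, ?_⟩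
      have hsymm : ∀ l k, X l k = X k l := by
        intro l k
        have h := congrFun (congrFun hpsd.1.eq l) k
        simp only [Matrix.conjTranspose_apply, star_trivial] at h
        exact h.symm
      have hrow : ∀ i, (∑ l, X i l) = 0 := by
        intro i
        have := congrFun hker i
        simpa [Matrix.mulVec, dotProduct, he] using this
      have hXJ : X * J = 0 := by
        ext i k; simp [Matrix.mul_apply, hJdef, hrow i]
      have hJX : J * X = 0 := by
        ext i k
        simp only [Matrix.mul_apply, hJdef, Matrix.of_apply, one_mul, Matrix.zero_apply]
        calc (∑ l, X l k) = ∑ l, X k l := by simp_rw [fun l => hsymm l k]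
        _ = 0 := hrow k
      have h1 : (1 - ((m : ℝ) + 1)⁻¹ • J) * X = X := by
        rw [Matrix.sub_mul, Matrix.one_mul, Matrix.smul_mul, hJX, smul_zero, sub_zero]
      have h2 : X * (1 - ((m : ℝ) + 1)⁻¹ • J) = X := by
        rw [Matrix.mul_sub, Matrix.mul_one, Matrix.mul_smul, hXJ, smul_zero, sub_zero]
      calc X = (U * Uᵀ) * X * (U * Uᵀ) := by rw [hUUt, h1, h2]
      _ = U * (Uᵀ * X * U) * Uᵀ := by simp only [Matrix.mul_assoc]
    · rintro ⟨A, hA, rfl⟩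
      constructor
      · have := hA.mul_mul_conjTranspose_same U
        rwa [hUH] at this
      · rw [Matrix.mul_assoc, ← Matrix.mulVec_mulVec, ← Matrix.mulVec_mulVec, hUte]
        simp
end

section
/- If a ∈ R^E has all strictly positive components and the graph G = (V,E) is connected, then the Laplacian L(a) = Diag(P*(a)e) − P*(a) is positive semidefinite with kernel equal to span{e}, and the minimal face of S^n_+ containing L(a) is S_c ∩ S^n_+. -/
/-- The minimal face of `C` containing `S`: the intersection of all faces of `C`
containing `S`. -/
def minFace {M : Type*} [AddCommGroup M] [Module ℝ M] (S C : Set M) : Set M :=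
  ⋂₀ {F | IsFaceOf F C ∧ S ⊆ F}

open Matrix

section
variable {n : ℕ} (G : SimpleGraph (Fin n)) [DecidableRel G.Adj] (a : Fin n → Fin n → ℝ)

/-- edge weights -/
def wgt : Fin n → Fin n → ℝ := fun i j => if G.Adj i j then a i j else 0

/-- the Laplacian -/
def Lap : Matrix (Fin n) (Fin n) ℝ := Matrix.of fun i j : Fin n =>
  if i = j then ∑ k, if G.Adj i k then a i k else 0
  else if G.Adj i j then -(a i j) else 0

lemma wgt_self (i : Fin n) : wgt G a i i = 0 := by simp [wgt]

lemma wgt_nonneg (hpos : ∀ i j, G.Adj i j → 0 < a i j) (i j : Fin n) : 0 ≤ wgt G a i j := by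
  unfold wgt
  split
  · exact (hpos i j ‹_›).le
  · exact le_refl 0

lemma Lap_apply (i j : Fin n) :
    Lap G a i j = (if i = j then ∑ k, wgt G a i k else 0) - wgt G a i j := by
  by_cases h : i = j
  · subst h; simp [Lap, wgt_self, wgt]
  · simp [Lap, h, wgt]
    by_cases h' : G.Adj i j <;> simp [h']

lemma wgt_symm (hsym : ∀ i j, a i j = a j i) (i j : Fin n) : wgt G a i j = wgt G a j i := by
  unfold wgt
  by_cases h : G.Adj i j
  · simp [h, h.symm, hsym]
  · rw [if_neg h, if_neg (fun h' => h (G.adj_symm h'))]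

lemma Lap_mulVec (x : Fin n → ℝ) (i : Fin n) :
    ((Lap G a) *ᵥ x) i = (∑ k, wgt G a i k) * x i - ∑ j, wgt G a i j * x j := by
  simp only [Matrix.mulVec, dotProduct, Lap_apply, sub_mul, Finset.sum_sub_distrib,
    ite_mul, zero_mul]
  rw [Finset.sum_ite_eq (Finset.univ) i (fun j => (∑ k, wgt G a i k) * x j)]
  simp

lemma quad_eq (x : Fin n → ℝ) (hsym : ∀ i j, a i j = a j i) :
    x ⬝ᵥ (Lap G a) *ᵥ x = (1/2) * ∑ i, ∑ j, wgt G a i j * (x i - x j)^2 := by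
  have comm : ∑ i, ∑ j, wgt G a i j * (x j * x j) = ∑ i, ∑ j, wgt G a i j * (x i * x i) := by
    rw [Finset.sum_comm]
    exact Finset.sum_congr rfl fun i _ => Finset.sum_congr rfl fun j _ => by
      rw [wgt_symm G a hsym]
  have expand : ∑ i, ∑ j, wgt G a i j * (x i - x j)^2
      = ∑ i, ∑ j, (wgt G a i j * (x i * x i) - 2 * (wgt G a i j * (x i * x j))
          + wgt G a i j * (x j * x j)) := by
    refine Finset.sum_congr rfl fun i _ => Finset.sum_congr rfl fun j _ => by ring
  have key : ∀ i, x i * ((∑ k, wgt G a i k) * x i - ∑ j, wgt G a i j * x j)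
      = ∑ j, wgt G a i j * (x i * x i) - ∑ j, (wgt G a i j * (x i * x j)) := by
    intro i
    rw [mul_sub, Finset.mul_sum]
    congr 1
    · rw [mul_comm, Finset.sum_mul, Finset.sum_mul]
      exact Finset.sum_congr rfl fun j _ => by ring
    · exact Finset.sum_congr rfl fun j _ => by ring
  calc x ⬝ᵥ (Lap G a) *ᵥ x
      = ∑ i, ∑ j, wgt G a i j * (x i * x i) - ∑ i, ∑ j, (wgt G a i j * (x i * x j)) := by
        simp only [dotProduct, Lap_mulVec, key, Finset.sum_sub_distrib]
    _ = (1/2) * ∑ i, ∑ j, wgt G a i j * (x i - x j)^2 := by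
        rw [expand]
        simp only [Finset.sum_add_distrib, Finset.sum_sub_distrib, comm, ← Finset.mul_sum]
        ring

lemma quad_nonneg (hsym : ∀ i j, a i j = a j i) (hpos : ∀ i j, G.Adj i j → 0 < a i j)
    (x : Fin n → ℝ) : 0 ≤ x ⬝ᵥ (Lap G a) *ᵥ x := by
  rw [quad_eq G a x hsym]
  have : 0 ≤ ∑ i, ∑ j, wgt G a i j * (x i - x j)^2 :=
    Finset.sum_nonneg fun i _ => Finset.sum_nonneg fun j _ =>
      mul_nonneg (wgt_nonneg G a hpos i j) (sq_nonneg _)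
  linarith

lemma Lap_isHermitian (hsym : ∀ i j, a i j = a j i) : (Lap G a).IsHermitian := by
  ext i j
  simp only [Matrix.conjTranspose_apply, star_trivial]
  by_cases h : i = j
  · subst h; rfl
  · simp only [Lap, Matrix.of_apply, if_neg h, if_neg (Ne.symm h)]
    by_cases h' : G.Adj i j
    · rw [if_pos h', if_pos h'.symm, hsym]
    · rw [if_neg h', if_neg (fun hh => h' (G.adj_symm hh))]

lemma Lap_posSemidef (hsym : ∀ i j, a i j = a j i) (hpos : ∀ i j, G.Adj i j → 0 < a i j) :
    (Lap G a).PosSemidef :=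
  Matrix.PosSemidef.of_dotProduct_mulVec_nonneg (Lap_isHermitian G a hsym) fun x => by
    rw [star_trivial]; exact quad_nonneg G a hsym hpos x

lemma Lap_mulVec_const (c : ℝ) : (Lap G a) *ᵥ (fun _ => c) = 0 := by
  funext i
  rw [Lap_mulVec]
  simp [← Finset.sum_mul]

lemma quad_zero_const (hconn : G.Connected) (hsym : ∀ i j, a i j = a j i)
    (hpos : ∀ i j, G.Adj i j → 0 < a i j) (x : Fin n → ℝ)
    (hq : x ⬝ᵥ (Lap G a) *ᵥ x = 0) : ∃ c : ℝ, x = fun _ => c := by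
  rw [quad_eq G a x hsym] at hq
  have hsum : ∑ i, ∑ j, wgt G a i j * (x i - x j)^2 = 0 := by linarith
  have hterm : ∀ i j : Fin n, wgt G a i j * (x i - x j)^2 = 0 := by
    intro i j
    have h1 := (Finset.sum_eq_zero_iff_of_nonneg (fun i _ =>
      Finset.sum_nonneg fun j _ => mul_nonneg (wgt_nonneg G a hpos i j) (sq_nonneg _))).mp
      hsum i (Finset.mem_univ i)
    exact (Finset.sum_eq_zero_iff_of_nonneg (fun j _ =>
      mul_nonneg (wgt_nonneg G a hpos i j) (sq_nonneg _))).mp h1 j (Finset.mem_univ j)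
  have hadj : ∀ i j : Fin n, G.Adj i j → x i = x j := by
    intro i j hij
    have := hterm i j
    rw [wgt, if_pos hij] at this
    have h2 : (x i - x j)^2 = 0 := by
      rcases mul_eq_zero.mp this with h | h
      · exact absurd h (hpos i j hij).ne'
      · exact h
    have := sq_eq_zero_iff.mp h2
    linarith
  obtain ⟨i0⟩ := hconn.nonempty
  refine ⟨x i0, funext fun j => ?_⟩
  obtain ⟨wlk⟩ := hconn.preconnected j i0
  induction wlk with
  | nil => rfl
  | cons h p ih => exact (hadj _ _ h).trans ih

end

lemma quad_continuous {n : ℕ} (A : Matrix (Fin n) (Fin n) ℝ) :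
    Continuous fun x : Fin n → ℝ => x ⬝ᵥ A *ᵥ x := by
  simp only [dotProduct, Matrix.mulVec]
  exact continuous_finset_sum _ fun i _ => (continuous_apply i).mul
    (continuous_finset_sum _ fun j _ => continuous_const.mul (continuous_apply j))

lemma smul_quad {n : ℕ} (A : Matrix (Fin n) (Fin n) ℝ) (c : ℝ) (x : Fin n → ℝ) :
    (c • x) ⬝ᵥ A *ᵥ (c • x) = c^2 * (x ⬝ᵥ A *ᵥ x) := by
  rw [Matrix.mulVec_smul, smul_dotProduct, dotProduct_smul]
  simp [smul_eq_mul]; ring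

lemma exists_eps {n : ℕ} [Nonempty (Fin n)] (A B : Matrix (Fin n) (Fin n) ℝ)
    (hA : ∀ x : Fin n → ℝ, x ≠ 0 → 0 < x ⬝ᵥ A *ᵥ x) (hB : ∀ x, 0 ≤ x ⬝ᵥ B *ᵥ x) :
    ∃ ε : ℝ, ε ∈ Set.Ioo (0:ℝ) 1 ∧ ∀ x, ε * (x ⬝ᵥ B *ᵥ x) ≤ x ⬝ᵥ A *ᵥ x := by
  have hf := quad_continuous A
  have hg := quad_continuous B
  have hφ : ContinuousOn (fun x : Fin n → ℝ => (x ⬝ᵥ A *ᵥ x) / (x ⬝ᵥ B *ᵥ x + 1))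
      (Metric.sphere 0 1) :=
    (hf.div (hg.add continuous_const) fun x => by have := hB x; simp only [Pi.add_apply]; exact ne_of_gt (by linarith)).continuousOn
  have hne : (Metric.sphere (0 : Fin n → ℝ) 1).Nonempty :=
    NormedSpace.sphere_nonempty.mpr zero_le_one
  obtain ⟨m, hm, hmin'⟩ := (isCompact_sphere (0 : Fin n → ℝ) 1).exists_isMinOn hne hφ
  have hm1 : ‖m‖ = 1 := mem_sphere_zero_iff_norm.mp hm
  have hm0 : m ≠ 0 := fun h => by simp [h] at hm1
  have hgm : (0:ℝ) < m ⬝ᵥ B *ᵥ m + 1 := by have := hB m; linarith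
  set ε := min ((m ⬝ᵥ A *ᵥ m) / (m ⬝ᵥ B *ᵥ m + 1)) (1/2) with hεdef
  have hε0 : 0 < ε := lt_min (div_pos (hA m hm0) hgm) (by norm_num)
  have hε1 : ε < 1 := lt_of_le_of_lt (min_le_right _ _) (by norm_num)
  refine ⟨ε, ⟨hε0, hε1⟩, fun x => ?_⟩
  by_cases hx : x = 0
  · subst hx; simp
  · have hnx : (0:ℝ) < ‖x‖ := norm_pos_iff.mpr hx
    set u := ‖x‖⁻¹ • x with hu_def
    have hu : u ∈ Metric.sphere (0 : Fin n → ℝ) 1 := by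
      rw [mem_sphere_zero_iff_norm]; exact norm_smul_inv_norm hx
    have hgu : (0:ℝ) < u ⬝ᵥ B *ᵥ u + 1 := by have := hB u; linarith
    have h1 : ε ≤ (u ⬝ᵥ A *ᵥ u) / (u ⬝ᵥ B *ᵥ u + 1) := le_trans (min_le_left _ _) (hmin' hu)
    have h2 : ε * (u ⬝ᵥ B *ᵥ u + 1) ≤ u ⬝ᵥ A *ᵥ u := (le_div_iff₀ hgu).mp h1
    have key : ε * (u ⬝ᵥ B *ᵥ u) ≤ u ⬝ᵥ A *ᵥ u := by nlinarith
    have hxu : x = ‖x‖ • u := by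
      rw [hu_def, smul_smul, mul_inv_cancel₀ hnx.ne', one_smul]
    have hfa : x ⬝ᵥ A *ᵥ x = ‖x‖^2 * (u ⬝ᵥ A *ᵥ u) := by
      conv_lhs => rw [hxu]
      exact smul_quad A _ u
    have hfb : x ⬝ᵥ B *ᵥ x = ‖x‖^2 * (u ⬝ᵥ B *ᵥ u) := by
      conv_lhs => rw [hxu]
      exact smul_quad B _ u
    rw [hfa, hfb]
    nlinarith [sq_nonneg ‖x‖]

lemma herm_smul {n : ℕ} {X : Matrix (Fin n) (Fin n) ℝ} (hX : X.IsHermitian) (c : ℝ) :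
    (c • X).IsHermitian := by
  unfold Matrix.IsHermitian at *
  rw [Matrix.conjTranspose_smul, hX, star_trivial]

lemma psd_smul {n : ℕ} {X : Matrix (Fin n) (Fin n) ℝ} (hX : X.PosSemidef) {c : ℝ}
    (hc : 0 ≤ c) : (c • X).PosSemidef := by
  refine .of_dotProduct_mulVec_nonneg (herm_smul hX.1 c) fun x => ?_
  rw [Matrix.smul_mulVec, dotProduct_smul, smul_eq_mul]
  exact mul_nonneg hc (hX.dotProduct_mulVec_nonneg x)

lemma psd_add {n : ℕ} {X Y : Matrix (Fin n) (Fin n) ℝ} (hX : X.PosSemidef)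
    (hY : Y.PosSemidef) : (X + Y).PosSemidef := by
  refine .of_dotProduct_mulVec_nonneg (hX.1.add hY.1) fun x => ?_
  rw [Matrix.add_mulVec, dotProduct_add]
  exact add_nonneg (hX.dotProduct_mulVec_nonneg x) (hY.dotProduct_mulVec_nonneg x)

lemma quad_shift {n : ℕ} (M : Matrix (Fin n) (Fin n) ℝ) (hM : M.IsHermitian)
    (hMe : M *ᵥ (fun _ => (1:ℝ)) = 0) (y : Fin n → ℝ) (c : ℝ) :
    (y + fun _ => c) ⬝ᵥ M *ᵥ (y + fun _ => c) = y ⬝ᵥ M *ᵥ y := by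
  have hMT : Mᵀ = M := by
    ext i j
    have := congrFun (congrFun hM i) j
    simpa [Matrix.conjTranspose_apply] using this
  have hzero : ∀ z : Fin n → ℝ, (fun _ => (1:ℝ)) ⬝ᵥ M *ᵥ z = 0 := by
    intro z
    rw [Matrix.dotProduct_mulVec, ← Matrix.mulVec_transpose, hMT, hMe, zero_dotProduct]
  have hc : (fun _ => c : Fin n → ℝ) = c • (fun _ => (1:ℝ)) := by
    funext i; simp
  rw [hc, Matrix.mulVec_add, Matrix.mulVec_smul, hMe, smul_zero, add_zero, add_dotProduct,
    smul_dotProduct, hzero, smul_zero, add_zero]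

lemma ones_quad {n : ℕ} (x : Fin n → ℝ) :
    x ⬝ᵥ (Matrix.of fun _ _ => (1:ℝ)) *ᵥ x = (∑ i, x i)^2 := by
  simp only [dotProduct, Matrix.mulVec, Matrix.of_apply, one_mul]
  rw [← Finset.sum_mul, sq]

/-- The set `{X PSD | X e = 0}` is a face of the PSD cone. -/
lemma isFaceOf_psd_ker {n : ℕ} :
    IsFaceOf {X : Matrix (Fin n) (Fin n) ℝ | X.PosSemidef ∧ X *ᵥ (fun _ => (1:ℝ)) = 0}
      {X : Matrix (Fin n) (Fin n) ℝ | X.PosSemidef} := by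
  refine ⟨fun X hX => hX.1, ?_, ?_⟩
  · rintro X ⟨hX, hXe⟩ Y ⟨hY, hYe⟩ s t hs ht hst
    refine ⟨psd_add (psd_smul hX hs) (psd_smul hY ht), ?_⟩
    rw [Matrix.add_mulVec, Matrix.smul_mulVec, Matrix.smul_mulVec, hXe, hYe,
      smul_zero, smul_zero, add_zero]
  · rintro X hX Y hY t ⟨ht0, ht1⟩ ⟨hZpsd, hZe⟩
    have he : ∀ (W : Matrix (Fin n) (Fin n) ℝ), W.PosSemidef →
        (0:ℝ) ≤ (fun _ => (1:ℝ)) ⬝ᵥ W *ᵥ (fun _ => (1:ℝ)) := by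
      intro W hW
      have := hW.dotProduct_mulVec_nonneg (fun _ => (1:ℝ))
      rwa [star_trivial] at this
    have hq : (fun _ => (1:ℝ)) ⬝ᵥ (t • X + (1-t) • Y) *ᵥ (fun _ => (1:ℝ)) = 0 := by
      rw [hZe, dotProduct_zero]
    rw [Matrix.add_mulVec, Matrix.smul_mulVec, Matrix.smul_mulVec,
      dotProduct_add, dotProduct_smul, dotProduct_smul, smul_eq_mul, smul_eq_mul] at hq
    have hXq : (fun _ => (1:ℝ)) ⬝ᵥ X *ᵥ (fun _ => (1:ℝ)) = 0 := by
      nlinarith [he X hX, he Y hY]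
    have hYq : (fun _ => (1:ℝ)) ⬝ᵥ Y *ᵥ (fun _ => (1:ℝ)) = 0 := by
      nlinarith [he X hX, he Y hY]
    have hstar : (star (fun _ => (1:ℝ)) : Fin n → ℝ) = fun _ => (1:ℝ) := star_trivial _
    constructor
    · exact ⟨hX, (hX.dotProduct_mulVec_zero_iff _).mp (by rw [hstar]; exact hXq)⟩
    · exact ⟨hY, (hY.dotProduct_mulVec_zero_iff _).mp (by rw [hstar]; exact hYq)⟩

/-- For a connected graph `G` and strictly positive edge weights `a`, the Laplacian
`L(a) = Diag(P*(a) e) - P*(a)` is positive semidefinite, its kernel is the span of the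
all-ones vector, and the minimal face of the PSD cone containing it is `S_c ∩ S^n₊`. -/
theorem laplacian_minimal_face {n : ℕ} (G : SimpleGraph (Fin n)) [DecidableRel G.Adj]
    (hconn : G.Connected) (a : Fin n → Fin n → ℝ)
    (hsym : ∀ i j, a i j = a j i) (hpos : ∀ i j, G.Adj i j → 0 < a i j) :
    (Matrix.of fun i j : Fin n =>
        if i = j then ∑ k, if G.Adj i k then a i k else 0
        else if G.Adj i j then -(a i j) else 0).PosSemidef ∧
    {x : Fin n → ℝ | (Matrix.of fun i j : Fin n =>
        if i = j then ∑ k, if G.Adj i k then a i k else 0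
        else if G.Adj i j then -(a i j) else 0).mulVec x = 0}
      = {x : Fin n → ℝ | ∃ c : ℝ, x = fun _ => c} ∧
    minFace {(Matrix.of fun i j : Fin n =>
        if i = j then ∑ k, if G.Adj i k then a i k else 0
        else if G.Adj i j then -(a i j) else 0)}
        {X : Matrix (Fin n) (Fin n) ℝ | X.PosSemidef}
      = {X : Matrix (Fin n) (Fin n) ℝ | X.PosSemidef ∧
          X.mulVec (fun _ => (1 : ℝ)) = 0} := by
  haveI : Nonempty (Fin n) := hconn.nonempty
  have hLdef : (Matrix.of fun i j : Fin n =>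
      if i = j then ∑ k, if G.Adj i k then a i k else 0
      else if G.Adj i j then -(a i j) else 0) = Lap G a := rfl
  rw [hLdef]
  have hLpsd := Lap_posSemidef G a hsym hpos
  have hLe : (Lap G a) *ᵥ (fun _ => (1:ℝ)) = 0 := Lap_mulVec_const G a 1
  refine ⟨hLpsd, ?_, ?_⟩
  · -- kernel
    ext x
    simp only [Set.mem_setOf_eq]
    constructor
    · intro hx
      apply quad_zero_const G a hconn hsym hpos
      rw [hx, dotProduct_zero]
    · rintro ⟨c, rfl⟩
      exact Lap_mulVec_const G a c
  · -- minimal face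
    apply Set.Subset.antisymm
    · intro X hX
      exact hX _ ⟨isFaceOf_psd_ker, Set.singleton_subset_iff.mpr ⟨hLpsd, hLe⟩⟩
    · rintro X ⟨hXpsd, hXe⟩
      rw [minFace, Set.mem_sInter]
      rintro F ⟨hF, hLF⟩
      have hLmem : Lap G a ∈ F := hLF rfl
      -- the perturbed matrix L + J is positive definite in the quadratic sense
      set J : Matrix (Fin n) (Fin n) ℝ := Matrix.of fun _ _ => (1:ℝ) with hJdef
      have hApos : ∀ x : Fin n → ℝ, x ≠ 0 → 0 < x ⬝ᵥ (Lap G a + J) *ᵥ x := by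
        intro x hx
        rw [Matrix.add_mulVec, dotProduct_add, ones_quad]
        have h1 := quad_nonneg G a hsym hpos x
        have h2 := sq_nonneg (∑ i, x i)
        rcases lt_or_eq_of_le (add_nonneg h1 h2) with h | h
        · exact h
        · exfalso
          have hq : x ⬝ᵥ (Lap G a) *ᵥ x = 0 := by nlinarith
          have hs : (∑ i, x i) = 0 := by
            have : (∑ i, x i)^2 = 0 := by nlinarith
            exact pow_eq_zero_iff (by norm_num) |>.mp this
          obtain ⟨c, rfl⟩ := quad_zero_const G a hconn hsym hpos x hq
          have hn : 0 < (n:ℝ) := by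
            have : 0 < n := Fin.pos_iff_nonempty.mpr ‹_›
            exact_mod_cast this
          rw [Finset.sum_const, Finset.card_univ, Fintype.card_fin, nsmul_eq_mul] at hs
          have hc : c = 0 := by
            rcases mul_eq_zero.mp hs with h | h
            · exact absurd h hn.ne'
            · exact h
          exact hx (by funext i; rw [hc]; rfl)
      have hBpos : ∀ x : Fin n → ℝ, 0 ≤ x ⬝ᵥ X *ᵥ x := by
        intro x
        have := hXpsd.dotProduct_mulVec_nonneg x
        rwa [star_trivial] at this
      obtain ⟨ε, ⟨hε0, hε1⟩, hεle⟩ := exists_eps (Lap G a + J) X hApos hBpos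
      -- key inequality: ε x X x ≤ x L x for all x
      have hkey : ∀ x : Fin n → ℝ, ε * (x ⬝ᵥ X *ᵥ x) ≤ x ⬝ᵥ (Lap G a) *ᵥ x := by
        intro x
        set c : ℝ := (∑ i, x i) / n with hcdef
        set y : Fin n → ℝ := fun i => x i - c with hydef
        have hxy : x = y + fun _ => c := by funext i; simp [hydef]
        have hysum : ∑ i, y i = 0 := by
          have hn : 0 < (n:ℝ) := by
            have : 0 < n := Fin.pos_iff_nonempty.mpr ‹_›
            exact_mod_cast this
          simp only [hydef, Finset.sum_sub_distrib, Finset.sum_const, Finset.card_univ,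
            Fintype.card_fin, nsmul_eq_mul, hcdef]
          field_simp
          ring
        have hXq : x ⬝ᵥ X *ᵥ x = y ⬝ᵥ X *ᵥ y := by
          conv_lhs => rw [hxy]
          exact quad_shift X hXpsd.1 hXe y c
        have hLq : x ⬝ᵥ (Lap G a) *ᵥ x = y ⬝ᵥ (Lap G a) *ᵥ y := by
          conv_lhs => rw [hxy]
          exact quad_shift (Lap G a) hLpsd.1 hLe y c
        rw [hXq, hLq]
        have := hεle y
        rw [Matrix.add_mulVec, dotProduct_add, ones_quad, hysum] at this
        simpa using this
      -- Y := (1-ε)⁻¹ • (L - ε • X) is PSD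
      set Y : Matrix (Fin n) (Fin n) ℝ := (1-ε)⁻¹ • (Lap G a - ε • X) with hYdef
      have hYpsd : Y.PosSemidef := by
        refine .of_dotProduct_mulVec_nonneg (herm_smul ((Lap_isHermitian G a hsym).sub (herm_smul hXpsd.1 ε)) _) fun x => ?_
        rw [star_trivial, hYdef, Matrix.smul_mulVec, dotProduct_smul, smul_eq_mul]
        apply mul_nonneg (inv_nonneg.mpr (by linarith))
        rw [Matrix.sub_mulVec, dotProduct_sub, Matrix.smul_mulVec, dotProduct_smul,
          smul_eq_mul]
        have := hkey x
        linarith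
      have hLcomb : ε • X + (1-ε) • Y = Lap G a := by
        rw [hYdef, smul_smul, mul_inv_cancel₀ (by linarith : (1:ℝ)-ε ≠ 0), one_smul]
        abel
      have := hF.2.2 X hXpsd Y hYpsd ε ⟨hε0, hε1⟩ (by rw [hLcomb]; exact hLmem)
      exact this.1
end

section
/- Let M : E → Y be linear between Euclidean spaces, C ⊆ E a proper (closed, full-dimensional) convex cone, and F = {X ∈ C : M(X) = b} nonempty. A vector v ∈ Y exposes a proper face of M(C) containing b if and only if v satisfies: M*v ∈ C*, M*v ≠ 0, and ⟨v,b⟩ = 0. -/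
/-- The nonnegative polar cone of a set `C`. -/
def polarCone {M : Type*} [NormedAddCommGroup M] [InnerProductSpace ℝ M]
    (C : Set M) : Set M :=
  {y | ∀ x ∈ C, 0 ≤ (inner ℝ y x : ℝ)}

/-- Let `M : E → Y` be linear between Euclidean spaces, `C ⊆ E` a proper (closed,
full-dimensional) convex cone, and `F = {X ∈ C : M X = b}` nonempty.  A vector `v`
exposes a proper face of `M(C)` containing `b` if, and only if, `v` satisfies the
auxiliary system `M* v ∈ C*`, `M* v ≠ 0`, `⟨v, b⟩ = 0`. -/
theorem exposes_iff_auxiliary_system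
    {E Y : Type*} [NormedAddCommGroup E] [InnerProductSpace ℝ E]
    [FiniteDimensional ℝ E] [NormedAddCommGroup Y] [InnerProductSpace ℝ Y]
    [FiniteDimensional ℝ Y]
    (M : E →ₗ[ℝ] Y) (C : Set E)
    (hconv : Convex ℝ C) (hcone : ∀ x ∈ C, ∀ t : ℝ, 0 ≤ t → t • x ∈ C)
    (hclosed : IsClosed C) (hint : (interior C).Nonempty)
    (b : Y) (hF : {X ∈ C | M X = b}.Nonempty) (v : Y) :
    (v ∈ polarCone (M '' C) ∧
        (M '' C) ∩ {y | (inner ℝ v y : ℝ) = 0} ≠ M '' C ∧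
        b ∈ (M '' C) ∩ {y | (inner ℝ v y : ℝ) = 0})
      ↔ (LinearMap.adjoint M v ∈ polarCone C ∧ LinearMap.adjoint M v ≠ 0 ∧
          (inner ℝ v b : ℝ) = 0) := by
  have key : ∀ x : E, (inner ℝ (LinearMap.adjoint M v) x : ℝ) = inner ℝ v (M x) :=
    fun x => LinearMap.adjoint_inner_left M x v
  constructor
  · rintro ⟨hp, hne, hbm, hb⟩
    refine ⟨fun x hx => by rw [key]; exact hp _ ⟨x, hx, rfl⟩, ?_, hb⟩
    intro h0
    apply hne
    ext y
    simp only [Set.mem_inter_iff, Set.mem_setOf_eq, and_iff_left_iff_imp]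
    rintro ⟨x, hx, rfl⟩
    have h := key x
    rw [h0, inner_zero_left] at h
    exact h.symm
  · rintro ⟨hp, hne, hb⟩
    obtain ⟨x₀, hx₀⟩ := hF
    refine ⟨?_, ?_, ⟨⟨x₀, hx₀.1, hx₀.2⟩, hb⟩⟩
    · rintro y ⟨x, hx, rfl⟩
      rw [← key]; exact hp x hx
    · set u := LinearMap.adjoint M v with hu
      obtain ⟨z, hz⟩ := hint
      have hzC : z ∈ C := interior_subset hz
      obtain ⟨ε, hε, hball⟩ := Metric.mem_nhds_iff.mp (mem_interior_iff_mem_nhds.mp hz)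
      have hun : (0:ℝ) < ‖u‖ := norm_pos_iff.mpr hne
      set t : ℝ := ε / (2 * ‖u‖) with ht
      have htpos : 0 < t := div_pos hε (by positivity)
      have hmem : z - t • u ∈ C := by
        apply hball
        rw [Metric.mem_ball, dist_eq_norm]
        have : z - t • u - z = -(t • u) := by abel
        rw [this, norm_neg, norm_smul, Real.norm_eq_abs, abs_of_pos htpos, ht]
        rw [div_mul_eq_mul_div, mul_comm]
        rw [div_lt_iff₀ (by positivity)]
        nlinarith
      have h1 : (0:ℝ) ≤ inner ℝ u (z - t • u) := hp _ hmem
      rw [inner_sub_right, inner_smul_right, real_inner_self_eq_norm_sq] at h1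
      have h2 : (0:ℝ) < inner ℝ u z := by nlinarith [mul_pos htpos (pow_pos hun 2)]
      intro heq
      have hMz : M z ∈ (M '' C) ∩ {y | (inner ℝ v y : ℝ) = 0} := by
        rw [heq]; exact ⟨z, hzC, rfl⟩
      have : (inner ℝ v (M z) : ℝ) = 0 := hMz.2
      rw [← key] at this
      linarith
end

section
/- Let M : E → Y be linear, C ⊆ E a proper convex cone, b ∈ Y with F = {X ∈ C : M(X) = b} nonempty, and let N = face(b, M(C)) be the minimal face of M(C) containing b. Then C ∩ M^{-1}(N) = face(F, C), the minimal face of C containing F. -/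
section Aux

variable {V : Type*} [AddCommGroup V] [Module ℝ V]

lemma isFaceOf_self {C : Set V} (hC : Convex ℝ C) : IsFaceOf C C :=
  ⟨subset_rfl, hC, fun x hx y hy _ _ _ => ⟨hx, hy⟩⟩

lemma subset_minFace {S C : Set V} : S ⊆ minFace S C :=
  fun x hx => Set.mem_sInter.2 fun _ hK => hK.2 hx

lemma isFaceOf_minFace {S C : Set V} (hC : Convex ℝ C) (hS : S ⊆ C) :
    IsFaceOf (minFace S C) C := by
  refine ⟨Set.sInter_subset_of_mem ⟨isFaceOf_self hC, hS⟩,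
    convex_sInter fun K hK => hK.1.2.1, ?_⟩
  intro x hx y hy t ht hmem
  exact ⟨Set.mem_sInter.2 fun K hK =>
      (hK.1.2.2 x hx y hy t ht (Set.mem_sInter.1 hmem K hK)).1,
    Set.mem_sInter.2 fun K hK =>
      (hK.1.2.2 x hx y hy t ht (Set.mem_sInter.1 hmem K hK)).2⟩

/-- Shrinking lemma: if `b = t₁ • x + (1-t₁) • z` then the same holds with any
smaller positive coefficient `t` on `x`. -/
lemma shrink {D : Set V} (hD : Convex ℝ D) {b x z : V} (hx : x ∈ D) (hz : z ∈ D)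
    {t1 t : ℝ} (h : b = t1 • x + (1 - t1) • z) (ht : 0 < t) (htt : t ≤ t1) (ht1 : t1 < 1) :
    ∃ z' ∈ D, b = t • x + (1 - t) • z' := by
  have h1t : (0:ℝ) < 1 - t := by linarith
  refine ⟨((t1 - t) / (1 - t)) • x + ((1 - t1) / (1 - t)) • z,
    hD hx hz (div_nonneg (by linarith) h1t.le) (div_nonneg (by linarith) h1t.le)
      (by field_simp; ring), ?_⟩
  rw [h]
  match_scalars <;> field_simp <;> ring

lemma extreme_aux {D : Set V} (hD : Convex ℝ D) {b x y z : V}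
    (hx : x ∈ D) (hy : y ∈ D) (hz : z ∈ D)
    {t u : ℝ} (ht : t ∈ Set.Ioo (0:ℝ) 1) (hu : u ∈ Set.Ioo (0:ℝ) 1)
    (heq : b = t • (u • x + (1 - u) • y) + (1 - t) • z) :
    ∃ z' ∈ D, ∃ t' : ℝ, t' ∈ Set.Ioo (0:ℝ) 1 ∧ b = t' • x + (1 - t') • z' := by
  obtain ⟨ht0, ht1⟩ := ht
  obtain ⟨hu0, hu1⟩ := hu
  have htu1 : t * u < 1 := by nlinarith
  have hne : (0:ℝ) < 1 - t * u := by linarith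
  refine ⟨(t * (1 - u) / (1 - t * u)) • y + ((1 - t) / (1 - t * u)) • z,
    hD hy hz (div_nonneg (by nlinarith) hne.le) (div_nonneg (by linarith) hne.le)
      (by field_simp; ring), t * u, ⟨by positivity, htu1⟩, ?_⟩
  rw [heq]
  match_scalars <;> field_simp <;> ring

/-- The candidate minimal face of `D` through `b`: points `x` such that `b` is a strict
convex combination of `x` and another point of `D`. -/
lemma isFaceOf_G {D : Set V} (hD : Convex ℝ D) {b : V} (hb : b ∈ D) :
    IsFaceOf {x ∈ D | ∃ z ∈ D, ∃ t : ℝ, t ∈ Set.Ioo (0:ℝ) 1 ∧ b = t • x + (1 - t) • z} D := by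
  refine ⟨fun x hx => hx.1, ?_, ?_⟩
  · -- convexity
    intro x1 hx1 x2 hx2 a a' ha ha' haa
    rcases ha.eq_or_lt with rfl | ha
    · have : a' = 1 := by linarith
      subst this; simpa using hx2
    rcases ha'.eq_or_lt with rfl | ha'
    · have : a = 1 := by linarith
      subst this; simpa using hx1
    obtain ⟨hx1D, z1, hz1, t1, ht1, h1⟩ := hx1
    obtain ⟨hx2D, z2, hz2, t2, ht2, h2⟩ := hx2
    set t := min t1 t2 with htdef
    have ht0 : 0 < t := lt_min ht1.1 ht2.1
    have ht1' : t < 1 := lt_of_le_of_lt (min_le_left _ _) ht1.2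
    obtain ⟨z1', hz1', h1'⟩ := shrink hD hx1D hz1 h1 ht0 (min_le_left _ _) ht1.2
    obtain ⟨z2', hz2', h2'⟩ := shrink hD hx2D hz2 h2 ht0 (min_le_right _ _) ht2.2
    refine ⟨hD hx1D hx2D ha.le ha'.le haa, a • z1' + a' • z2',
      hD hz1' hz2' ha.le ha'.le haa, t, ⟨ht0, ht1'⟩, ?_⟩
    calc b = a • b + a' • b := by rw [← add_smul, haa, one_smul]
      _ = a • (t • x1 + (1 - t) • z1') + a' • (t • x2 + (1 - t) • z2') := by
          rw [← h1', ← h2']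
      _ = t • (a • x1 + a' • x2) + (1 - t) • (a • z1' + a' • z2') := by module
  · -- extreme property
    intro x hx y hy u hu hmem
    obtain ⟨_, z, hz, t, ht, heq⟩ := hmem
    have hu' : 1 - u ∈ Set.Ioo (0:ℝ) 1 := ⟨by linarith [hu.2], by linarith [hu.1]⟩
    have heq' : b = t • ((1 - u) • y + (1 - (1 - u)) • x) + (1 - t) • z := by
      rw [heq]; module
    obtain ⟨z1, hz1, t1, ht1, h1⟩ := extreme_aux hD hx hy hz ht hu heq
    obtain ⟨z2, hz2, t2, ht2, h2⟩ := extreme_aux hD hy hx hz ht hu' heq'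
    exact ⟨⟨hx, z1, hz1, t1, ht1, h1⟩, ⟨hy, z2, hz2, t2, ht2, h2⟩⟩

lemma mem_G_self {D : Set V} {b : V} (hb : b ∈ D) :
    b ∈ {x ∈ D | ∃ z ∈ D, ∃ t : ℝ, t ∈ Set.Ioo (0:ℝ) 1 ∧ b = t • x + (1 - t) • z} :=
  ⟨hb, b, hb, 1/2, ⟨by norm_num, by norm_num⟩, by module⟩

end Aux

/-- Let `M : E → Y` be linear, `C ⊆ E` a proper convex cone, `b ∈ Y` with
`F = {X ∈ C : M X = b}` nonempty, and let `N = face(b, M(C))`.  Then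
`C ∩ M⁻¹(N) = face(F, C)`. -/
theorem preimage_minimal_face
    {E Y : Type*} [NormedAddCommGroup E] [InnerProductSpace ℝ E]
    [FiniteDimensional ℝ E] [NormedAddCommGroup Y] [InnerProductSpace ℝ Y]
    [FiniteDimensional ℝ Y]
    (M : E →ₗ[ℝ] Y) (C : Set E)
    (hconv : Convex ℝ C) (hcone : ∀ x ∈ C, ∀ t : ℝ, 0 ≤ t → t • x ∈ C)
    (hclosed : IsClosed C) (hint : (interior C).Nonempty)
    (b : Y) (hF : {X ∈ C | M X = b}.Nonempty) :
    C ∩ M ⁻¹' (minFace {b} (M '' C)) = minFace {X ∈ C | M X = b} C := by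
  have hD : Convex ℝ (M '' C) := hconv.linear_image M
  obtain ⟨X0, hX0C, hX0b⟩ := hF
  have hbD : b ∈ M '' C := ⟨X0, hX0C, hX0b⟩
  have hNG : minFace {b} (M '' C) ⊆
      {x ∈ M '' C | ∃ z ∈ M '' C, ∃ t : ℝ, t ∈ Set.Ioo (0:ℝ) 1 ∧ b = t • x + (1 - t) • z} :=
    Set.sInter_subset_of_mem ⟨isFaceOf_G hD hbD, Set.singleton_subset_iff.2 (mem_G_self hbD)⟩
  have hNface : IsFaceOf (minFace {b} (M '' C)) (M '' C) :=
    isFaceOf_minFace hD (Set.singleton_subset_iff.2 hbD)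
  apply Set.Subset.antisymm
  · rintro x ⟨hxC, hxN⟩
    refine Set.mem_sInter.2 fun K hK => ?_
    obtain ⟨hKface, hFK⟩ := hK
    obtain ⟨_, z, ⟨Z, hZC, rfl⟩, t, ht, hbeq⟩ := hNG hxN
    have hWC : t • x + (1 - t) • Z ∈ C :=
      hconv hxC hZC ht.1.le (by linarith [ht.2]) (by ring)
    have hW : t • x + (1 - t) • Z ∈ K := by
      refine hFK ⟨hWC, ?_⟩
      rw [map_add, map_smul, map_smul]
      exact hbeq.symm
    exact (hKface.2.2 x hxC Z hZC t ht hW).1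
  · apply Set.sInter_subset_of_mem
    refine ⟨⟨fun y hy => hy.1, hconv.inter (hNface.2.1.linear_preimage M), ?_⟩, ?_⟩
    · intro x hx y hy t ht hmem
      have h1 := hNface.2.2 (M x) ⟨x, hx, rfl⟩ (M y) ⟨y, hy, rfl⟩ t ht
        (by simpa [map_add, map_smul] using hmem.2)
      exact ⟨⟨hx, h1.1⟩, ⟨hy, h1.2⟩⟩
    · intro X hX
      exact ⟨hX.1, by rw [Set.mem_preimage, hX.2]; exact subset_minFace rfl⟩
end

section
/- Let M : E → Y be linear, C ⊆ E a proper convex cone, b ∈ Y with F = {X ∈ C : M(X) = b} nonempty, and N = face(b, M(C)). Then for any v ∈ Y: v exposes N (i.e., v ∈ (M(C))* and N = M(C) ∩ v^⊥) if and only if M*v exposes face(F, C) (i.e., M*v ∈ C* and face(F,C) = C ∩ (M*v)^⊥). -/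
section aux
variable {V : Type*} [AddCommGroup V] [Module ℝ V]

/-- membership half of the face property for the generated-face set. -/
lemma genFace_half (C F : Set V) (hC : Convex ℝ C)
    {x y : V} (hx : x ∈ C) (hy : y ∈ C) {t : ℝ} (ht : t ∈ Set.Ioo (0:ℝ) 1)
    (h : t • x + (1 - t) • y ∈ {y ∈ C | ∃ z ∈ C, ∃ s ∈ Set.Ioo (0:ℝ) 1,
        s • y + (1 - s) • z ∈ F}) :
    x ∈ {y ∈ C | ∃ z ∈ C, ∃ s ∈ Set.Ioo (0:ℝ) 1, s • y + (1 - s) • z ∈ F} := by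
  obtain ⟨-, z, hz, s, hs, hp⟩ := h
  obtain ⟨ht0, ht1⟩ := ht
  obtain ⟨hs0, hs1⟩ := hs
  have hst : (0:ℝ) < 1 - s * t := by nlinarith
  refine ⟨hx, (s * (1 - t) / (1 - s * t)) • y + ((1 - s) / (1 - s * t)) • z,
    hC hy hz (div_nonneg (by nlinarith) hst.le) (div_nonneg (by nlinarith) hst.le)
      (by field_simp; try ring), s * t,
    ⟨by positivity, by nlinarith⟩, ?_⟩
  have key : (s * t) • x + (1 - s * t) • ((s * (1 - t) / (1 - s * t)) • y
      + ((1 - s) / (1 - s * t)) • z) = s • (t • x + (1 - t) • y) + (1 - s) • z := by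
    match_scalars <;> (field_simp; try ring)
  rw [key]
  exact hp

lemma minFace_eq (C F : Set V) (hC : Convex ℝ C) (hFC : F ⊆ C) (hFconv : Convex ℝ F) :
    minFace F C
      = {y ∈ C | ∃ z ∈ C, ∃ s ∈ Set.Ioo (0:ℝ) 1, s • y + (1 - s) • z ∈ F} := by
  set G := {y ∈ C | ∃ z ∈ C, ∃ s ∈ Set.Ioo (0:ℝ) 1, s • y + (1 - s) • z ∈ F} with hG
  have hFG : F ⊆ G := by
    intro x hxF
    refine ⟨hFC hxF, x, hFC hxF, 1/2, ⟨by norm_num, by norm_num⟩, ?_⟩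
    have : (1/2 : ℝ) • x + (1 - 1/2 : ℝ) • x = x := by
      match_scalars; norm_num
    rwa [this]
  have hGconv : Convex ℝ G := by
    intro y₁ hy₁ y₂ hy₂ a b ha hb hab
    rcases eq_or_lt_of_le ha with h | ha
    · have hb1 : b = 1 := by linarith
      subst hb1; rw [← h]; simpa using hy₂
    rcases eq_or_lt_of_le hb with h | hb
    · have ha1 : a = 1 := by linarith
      subst ha1; rw [← h]; simpa using hy₁
    obtain ⟨hy₁C, z₁, hz₁, s₁, ⟨hs₁0, hs₁1⟩, hp₁⟩ := hy₁
    obtain ⟨hy₂C, z₂, hz₂, s₂, ⟨hs₂0, hs₂1⟩, hp₂⟩ := hy₂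
    have hb' : b = 1 - a := by linarith
    subst hb'
    have hd : (0:ℝ) < a * s₂ + (1 - a) * s₁ := by nlinarith
    have hm : (0:ℝ) < a * s₂ + (1 - a) * s₁ - s₁ * s₂ := by
      nlinarith [mul_pos ha (mul_pos hs₂0 (sub_pos.2 hs₁1)),
        mul_nonneg (mul_nonneg hb.le hs₁0.le) (sub_pos.2 hs₂1).le]
    set d := a * s₂ + (1 - a) * s₁ with hdd
    refine ⟨hC hy₁C hy₂C ha.le hb.le hab,
      (a * s₂ * (1 - s₁) / (d - s₁ * s₂)) • z₁
        + ((1 - a) * s₁ * (1 - s₂) / (d - s₁ * s₂)) • z₂,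
      hC hz₁ hz₂ (div_nonneg (mul_nonneg (mul_nonneg ha.le hs₂0.le) (by linarith)) hm.le) (div_nonneg (mul_nonneg (mul_nonneg hb.le hs₁0.le) (by linarith)) hm.le)
        (by rw [← add_div, div_eq_one_iff_eq hm.ne', hdd]; ring), s₁ * s₂ / d,
      ⟨div_pos (mul_pos hs₁0 hs₂0) hd, by rw [div_lt_one hd]; linarith⟩, ?_⟩
    have key : (s₁ * s₂ / d) • (a • y₁ + (1 - a) • y₂)
        + (1 - s₁ * s₂ / d) • ((a * s₂ * (1 - s₁) / (d - s₁ * s₂)) • z₁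
          + ((1 - a) * s₁ * (1 - s₂) / (d - s₁ * s₂)) • z₂)
        = (a * s₂ / d) • (s₁ • y₁ + (1 - s₁) • z₁)
          + ((1 - a) * s₁ / d) • (s₂ • y₂ + (1 - s₂) • z₂) := by
      match_scalars <;> (field_simp; try ring)
    rw [key]
    exact hFconv hp₁ hp₂ (div_nonneg (mul_nonneg ha.le hs₂0.le) hd.le)
      (div_nonneg (mul_nonneg hb.le hs₁0.le) hd.le) (by field_simp; try ring)
  have hface : IsFaceOf G C := by
    refine ⟨fun x hx => hx.1, hGconv, fun x hx y hy t ht h => ?_⟩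
    constructor
    · exact genFace_half C F hC hx hy ht h
    · refine genFace_half C F hC hy hx (t := 1 - t) ⟨by linarith [ht.2], by linarith [ht.1]⟩ ?_
      have : (1 - t) • y + (1 - (1 - t)) • x = t • x + (1 - t) • y := by
        module
      rwa [this]
  apply subset_antisymm
  · exact Set.sInter_subset_of_mem ⟨hface, hFG⟩
  · intro y hy
    rintro H ⟨hHface, hFH⟩
    obtain ⟨hyC, z, hz, s, hs, hp⟩ := hy
    exact (hHface.2.2 y hyC z hz s hs (hFH hp)).1

end aux

lemma inner_comb {Y : Type*} [NormedAddCommGroup Y] [InnerProductSpace ℝ Y]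
    (w p q : Y) (s : ℝ) :
    (inner ℝ w (s • p + (1 - s) • q) : ℝ) = s * inner ℝ w p + (1 - s) * inner ℝ w q := by
  simp [inner_add_right, real_inner_smul_right]

lemma comb_zero {s p q : ℝ} (hs : s ∈ Set.Ioo (0:ℝ) 1) (hp : 0 ≤ p) (hq : 0 ≤ q)
    (h : s * p + (1 - s) * q = 0) : p = 0 := by
  have hs1 : (0:ℝ) ≤ 1 - s := by linarith [hs.2]
  have h1 : s * p = 0 := by nlinarith [mul_nonneg hs.1.le hp, mul_nonneg hs1 hq]
  rcases mul_eq_zero.1 h1 with h | h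
  · exact absurd h hs.1.ne'
  · exact h

lemma half_comb {V : Type*} [AddCommGroup V] [Module ℝ V] (x : V) :
    (1/2 : ℝ) • x + (1 - 1/2 : ℝ) • x = x := by
  match_scalars; norm_num

/-- Let `M : E → Y` be linear, `C ⊆ E` a proper convex cone, `b ∈ Y` with
`F = {X ∈ C : M X = b}` nonempty, and `N = face(b, M(C))`.  For any `v ∈ Y`:
`v` exposes `N` if and only if `M* v` exposes `face(F, C)`. -/
theorem exposes_minimal_face_iff
    {E Y : Type*} [NormedAddCommGroup E] [InnerProductSpace ℝ E]
    [FiniteDimensional ℝ E] [NormedAddCommGroup Y] [InnerProductSpace ℝ Y]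
    [FiniteDimensional ℝ Y]
    (M : E →ₗ[ℝ] Y) (C : Set E)
    (hconv : Convex ℝ C) (hcone : ∀ x ∈ C, ∀ t : ℝ, 0 ≤ t → t • x ∈ C)
    (hclosed : IsClosed C) (hint : (interior C).Nonempty)
    (b : Y) (hF : {X ∈ C | M X = b}.Nonempty) (v : Y) :
    (v ∈ polarCone (M '' C) ∧
        minFace {b} (M '' C) = (M '' C) ∩ {y | (inner ℝ v y : ℝ) = 0})
      ↔ (LinearMap.adjoint M v ∈ polarCone C ∧
          minFace {X ∈ C | M X = b} C
            = C ∩ {x | (inner ℝ (LinearMap.adjoint M v) x : ℝ) = 0}) := by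
  obtain ⟨x₀, hx₀C, hx₀b⟩ := hF
  have had : ∀ x : E, (inner ℝ (LinearMap.adjoint M v) x : ℝ) = inner ℝ v (M x) := fun x =>
    LinearMap.adjoint_inner_left M x v
  have hMC : Convex ℝ (M '' C) := hconv.linear_image M
  have hFE : Convex ℝ {X ∈ C | M X = b} := by
    intro x hx y hy a c ha hc hac
    refine ⟨hconv hx.1 hy.1 ha hc hac, ?_⟩
    rw [map_add, map_smul, map_smul, hx.2, hy.2, ← add_smul, hac, one_smul]
  have hbMC : b ∈ M '' C := ⟨x₀, hx₀C, hx₀b⟩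
  rw [minFace_eq C {X ∈ C | M X = b} hconv (fun x hx => hx.1) hFE,
      minFace_eq (M '' C) {b} hMC (Set.singleton_subset_iff.2 hbMC) (convex_singleton b)]
  constructor
  · rintro ⟨hv, hN⟩
    have hvb : (inner ℝ v b : ℝ) = 0 := by
      have hb : b ∈ (M '' C) ∩ {y | (inner ℝ v y : ℝ) = 0} := by
        rw [← hN]
        exact ⟨hbMC, b, hbMC, 1/2, ⟨by norm_num, by norm_num⟩,
          by rw [half_comb]; exact rfl⟩
      exact hb.2
    refine ⟨fun x hx => by rw [had]; exact hv (M x) ⟨x, hx, rfl⟩, ?_⟩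
    ext x
    constructor
    · rintro ⟨hxC, z, hz, s, hs, hp⟩
      refine ⟨hxC, ?_⟩
      have h0 : (inner ℝ v (M (s • x + (1 - s) • z)) : ℝ) = 0 := by rw [hp.2, hvb]
      rw [map_add, map_smul, map_smul, inner_comb] at h0
      have := comb_zero hs (hv (M x) ⟨x, hxC, rfl⟩) (hv (M z) ⟨z, hz, rfl⟩) h0
      rw [Set.mem_setOf_eq, had]; exact this
    · rintro ⟨hxC, hx0⟩
      have hMx : M x ∈ (M '' C) ∩ {y | (inner ℝ v y : ℝ) = 0} :=
        ⟨⟨x, hxC, rfl⟩, by rw [Set.mem_setOf_eq, ← had]; exact hx0⟩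
      rw [← hN] at hMx
      obtain ⟨-, z, ⟨y, hyC, rfl⟩, s, hs, hp⟩ := hMx
      refine ⟨hxC, y, hyC, s, hs,
        ⟨hconv hxC hyC hs.1.le (by linarith [hs.2]) (by ring), ?_⟩⟩
      rw [map_add, map_smul, map_smul]
      exact hp
  · rintro ⟨hv, hG⟩
    have hvpol : v ∈ polarCone (M '' C) := by
      rintro y ⟨x, hx, rfl⟩; rw [← had]; exact hv x hx
    have hx₀G : x₀ ∈ C ∩ {x | (inner ℝ (LinearMap.adjoint M v) x : ℝ) = 0} := by
      rw [← hG]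
      exact ⟨hx₀C, x₀, hx₀C, 1/2, ⟨by norm_num, by norm_num⟩,
        by rw [half_comb]; exact ⟨hx₀C, hx₀b⟩⟩
    have hvb : (inner ℝ v b : ℝ) = 0 := by
      have := hx₀G.2
      rwa [Set.mem_setOf_eq, had, hx₀b] at this
    refine ⟨hvpol, ?_⟩
    ext y
    constructor
    · rintro ⟨hyMC, z, hzMC, s, hs, hp⟩
      refine ⟨hyMC, ?_⟩
      have h0 : (inner ℝ v (s • y + (1 - s) • z) : ℝ) = 0 := by
        rw [Set.mem_singleton_iff.1 hp, hvb]
      rw [inner_comb] at h0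
      exact comb_zero hs (hvpol y hyMC) (hvpol z hzMC) h0
    · rintro ⟨⟨x, hxC, rfl⟩, hy0⟩
      have hxG : x ∈ C ∩ {x | (inner ℝ (LinearMap.adjoint M v) x : ℝ) = 0} :=
        ⟨hxC, by rw [Set.mem_setOf_eq, had]; exact hy0⟩
      rw [← hG] at hxG
      obtain ⟨-, z, hzC, s, hs, hp⟩ := hxG
      refine ⟨⟨x, hxC, rfl⟩, M z, ⟨z, hzC, rfl⟩, s, hs, ?_⟩
      rw [Set.mem_singleton_iff, ← map_smul, ← map_smul, ← map_add]
      exact hp.2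
end

section
/- For a convex cone C and x ∈ C with minimal face F = face(x,C), the cone of feasible directions satisfies dir(x,C) = C + span F, and the tangent cone satisfies tcone(x,C) = (F^△)*, where F^△ = C* ∩ F^⊥ is the conjugate face. -/
open Pointwise

section helpers

variable {M : Type*} [AddCommGroup M] [Module ℝ M] {C : Set M}

lemma isFaceOf_self_s13 (hconv : Convex ℝ C) : IsFaceOf C C :=
  ⟨subset_rfl, hconv, fun a ha b hb _ _ _ => ⟨ha, hb⟩⟩

lemma minFace_subset_self (hconv : Convex ℝ C) {x : M} (hx : x ∈ C) : minFace {x} C ⊆ C :=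
  Set.sInter_subset_of_mem ⟨isFaceOf_self_s13 hconv, by simpa using hx⟩

lemma mem_minFace_self {x : M} (hx : x ∈ C) : x ∈ minFace {x} C :=
  Set.mem_sInter.2 fun _ hF => hF.2 rfl

lemma minFace_isFaceOf (hconv : Convex ℝ C) {x : M} (hx : x ∈ C) : IsFaceOf (minFace {x} C) C := by
  refine ⟨minFace_subset_self hconv hx, ?_, ?_⟩
  · exact convex_sInter fun F hF => hF.1.2.1
  · intro a ha b hb t ht hmem
    refine ⟨fun F hF => ?_, fun F hF => ?_⟩
    · exact (hF.1.2.2 a ha b hb t ht (hmem F hF)).1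
    · exact (hF.1.2.2 a ha b hb t ht (hmem F hF)).2

variable (hcone : ∀ y ∈ C, ∀ t : ℝ, 0 ≤ t → t • y ∈ C)
include hcone

lemma addC (hconv : Convex ℝ C) {a b : M} (ha : a ∈ C) (hb : b ∈ C) : a + b ∈ C := by
  have hm : (1/2 : ℝ) • a + (1/2 : ℝ) • b ∈ C := hconv ha hb (by norm_num) (by norm_num) (by norm_num)
  have := hcone _ hm 2 (by norm_num)
  rwa [smul_add, smul_smul, smul_smul, show (2:ℝ) * (1/2) = 1 by norm_num, one_smul, one_smul] at this

lemma face_smul_mem {F : Set M} (hF : IsFaceOf F C) {f : M} (hf : f ∈ F)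
    {t : ℝ} (ht : 0 < t) : t • f ∈ F := by
  have h1 : (1 + t : ℝ) ≠ 0 := by positivity
  have key : (1/(1+t) : ℝ) • (t • f) + (1 - 1/(1+t)) • (t⁻¹ • f) = f := by
    rw [smul_smul, smul_smul, ← add_smul]
    rw [show (1/(1+t)) * t + (1 - 1/(1+t)) * t⁻¹ = 1 by field_simp; ring, one_smul]
  exact (hF.2.2 (t • f) (hcone f (hF.1 hf) t ht.le) (t⁻¹ • f)
    (hcone f (hF.1 hf) t⁻¹ (by positivity))
    (1/(1+t)) ⟨by positivity, by rw [div_lt_one (by positivity)]; linarith⟩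
    (by rw [key]; exact hf)).1

lemma face_zero_mem {F : Set M} (hF : IsFaceOf F C) {f : M} (hf : f ∈ F) : (0:M) ∈ F := by
  have key : (1/2 : ℝ) • ((2:ℝ) • f) + (1 - 1/2 : ℝ) • (0:M) = f := by
    rw [smul_smul, smul_zero, add_zero, show (1/2 : ℝ) * 2 = 1 by norm_num, one_smul]
  exact (hF.2.2 ((2:ℝ) • f) (hcone f (hF.1 hf) 2 (by norm_num)) 0
    (by simpa using hcone f (hF.1 hf) 0 le_rfl)
    (1/2) ⟨by norm_num, by norm_num⟩ (by rw [key]; exact hf)).2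

lemma face_add_mem {F : Set M} (hF : IsFaceOf F C) {a b : M} (ha : a ∈ F) (hb : b ∈ F) :
    a + b ∈ F := by
  have hm : (1/2 : ℝ) • a + (1/2 : ℝ) • b ∈ F := hF.2.1 ha hb (by norm_num) (by norm_num) (by norm_num)
  have := face_smul_mem hcone hF hm (t := 2) (by norm_num)
  rwa [smul_add, smul_smul, smul_smul, show (2:ℝ) * (1/2) = 1 by norm_num, one_smul, one_smul] at this

lemma span_face_eq {F : Set M} (hF : IsFaceOf F C) {f₀ : M} (hf₀ : f₀ ∈ F)
    {v : M} (hv : v ∈ Submodule.span ℝ F) : ∃ a ∈ F, ∃ b ∈ F, v = a - b := by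
  have h0 : (0:M) ∈ F := face_zero_mem hcone hF hf₀
  induction hv using Submodule.span_induction with
  | mem z hz => exact ⟨z, hz, 0, h0, by simp⟩
  | zero => exact ⟨0, h0, 0, h0, by simp⟩
  | add y z _ _ hy hz =>
      obtain ⟨a, ha, b, hb, rfl⟩ := hy
      obtain ⟨a', ha', b', hb', rfl⟩ := hz
      exact ⟨a + a', face_add_mem hcone hF ha ha', b + b', face_add_mem hcone hF hb hb',
        by abel⟩
  | smul t y _ hy =>
      obtain ⟨a, ha, b, hb, rfl⟩ := hy
      rcases lt_trichotomy t 0 with htn | rfl | htp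
      · refine ⟨(-t) • b, face_smul_mem hcone hF hb (by linarith), (-t) • a,
          face_smul_mem hcone hF ha (by linarith), ?_⟩
        rw [smul_sub]; module
      · exact ⟨0, h0, 0, h0, by simp⟩
      · exact ⟨t • a, face_smul_mem hcone hF ha htp, t • b, face_smul_mem hcone hF hb htp,
          by rw [smul_sub]⟩

variable (hconv : Convex ℝ C)
include hconv

omit hcone in
lemma dir_downward {x y : M} (hx : x ∈ C) {ε ε' : ℝ} (hε' : 0 < ε') (hle : ε' ≤ ε)
    (h : x + ε • (x - y) ∈ C) : x + ε' • (x - y) ∈ C := by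
  have hε : 0 < ε := lt_of_lt_of_le hε' hle
  have hd : (0:ℝ) ≤ ε'/ε := by positivity
  have hd1 : ε'/ε ≤ 1 := by rw [div_le_one hε]; exact hle
  have hmem := hconv h hx (a := ε'/ε) (b := 1 - ε'/ε) hd (by linarith) (by ring)
  have key : (ε'/ε) • (x + ε • (x - y)) + (1 - ε'/ε) • x = x + ε' • (x - y) := by
    match_scalars <;> (field_simp; try ring)
  rwa [key] at hmem

omit hcone in
lemma G_convex {x : M} (hx : x ∈ C) : Convex ℝ {y | y ∈ C ∧ ∃ ε : ℝ, 0 < ε ∧ x + ε • (x - y) ∈ C} := by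
  intro y₁ hy₁ y₂ hy₂ a b ha hb hab
  obtain ⟨hc₁, ε₁, hε₁, h₁⟩ := hy₁
  obtain ⟨hc₂, ε₂, hε₂, h₂⟩ := hy₂
  refine ⟨hconv hc₁ hc₂ ha hb hab, min ε₁ ε₂, lt_min hε₁ hε₂, ?_⟩
  have e₁ : x + (min ε₁ ε₂) • (x - y₁) ∈ C :=
    dir_downward hconv hx (lt_min hε₁ hε₂) (min_le_left _ _) h₁
  have e₂ : x + (min ε₁ ε₂) • (x - y₂) ∈ C :=
    dir_downward hconv hx (lt_min hε₁ hε₂) (min_le_right _ _) h₂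
  have hmem := hconv e₁ e₂ ha hb hab
  have key : a • (x + (min ε₁ ε₂) • (x - y₁)) + b • (x + (min ε₁ ε₂) • (x - y₂))
      = x + (min ε₁ ε₂) • (x - (a • y₁ + b • y₂)) := by
    match_scalars
    · linear_combination (1 + min ε₁ ε₂) * hab
    · ring
    · ring
  rwa [key] at hmem

lemma G_face_aux {x : M} {a b : M} (ha : a ∈ C) (hb : b ∈ C)
    {t ε : ℝ} (ht : t ∈ Set.Ioo (0:ℝ) 1) (hε : 0 < ε)
    (hc : x + ε • (x - (t • a + (1 - t) • b)) ∈ C) :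
    ∃ δ : ℝ, 0 < δ ∧ x + δ • (x - a) ∈ C := by
  obtain ⟨ht0, ht1⟩ := ht
  set s : ℝ := 1 + ε - ε * t with hs_def
  have hs : 0 < s := by nlinarith
  have hs0 : s ≠ 0 := hs.ne'
  refine ⟨ε * t / s, by positivity, ?_⟩
  have hmem : s⁻¹ • ((x + ε • (x - (t • a + (1 - t) • b))) + (ε * (1 - t)) • b) ∈ C :=
    hcone _ (addC hcone hconv hc (hcone b hb _ (by nlinarith))) s⁻¹ (by positivity)
  have key : x + (ε * t / s) • (x - a)
      = s⁻¹ • ((x + ε • (x - (t • a + (1 - t) • b))) + (ε * (1 - t)) • b) := by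
    match_scalars <;> field_simp <;> ring
  rwa [key]

lemma G_isFaceOf {x : M} (hx : x ∈ C) :
    IsFaceOf {y | y ∈ C ∧ ∃ ε : ℝ, 0 < ε ∧ x + ε • (x - y) ∈ C} C := by
  refine ⟨fun y hy => hy.1, G_convex hconv hx, ?_⟩
  intro a ha b hb t ht hm
  obtain ⟨_, ε, hε, hc⟩ := hm
  have hswap : x + ε • (x - ((1 - t) • b + (1 - (1 - t)) • a)) ∈ C := by
    have : (1 - t) • b + (1 - (1 - t)) • a = t • a + (1 - t) • b := by module
    rwa [this]
  exact ⟨⟨ha, G_face_aux hcone hconv ha hb ht hε hc⟩,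
    ⟨hb, G_face_aux hcone hconv hb ha ⟨by linarith [ht.2], by linarith [ht.1]⟩ hε hswap⟩⟩

lemma minFace_mem_G {x : M} (hx : x ∈ C) {z : M} (hz : z ∈ minFace {x} C) :
    z ∈ C ∧ ∃ ε : ℝ, 0 < ε ∧ x + ε • (x - z) ∈ C := by
  have hG : IsFaceOf {y | y ∈ C ∧ ∃ ε : ℝ, 0 < ε ∧ x + ε • (x - y) ∈ C} C :=
    G_isFaceOf hcone hconv hx
  have hxG : x ∈ {y | y ∈ C ∧ ∃ ε : ℝ, 0 < ε ∧ x + ε • (x - y) ∈ C} :=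
    ⟨hx, 1, one_pos, by simp [hx]⟩
  exact hz _ ⟨hG, Set.singleton_subset_iff.2 hxG⟩

end helpers


section inner

variable {E : Type*} [NormedAddCommGroup E] [InnerProductSpace ℝ E]

lemma polarCone_eq [CompleteSpace E] (S : Set E) : polarCone S = ↑(ProperCone.innerDual S) := by
  ext y
  simp only [polarCone, Set.mem_setOf_eq, SetLike.mem_coe, ProperCone.mem_innerDual]
  exact ⟨fun h x hx => real_inner_comm y x ▸ h x hx,
    fun h x hx => real_inner_comm x y ▸ h hx⟩

lemma innerDualCone_closure_eq [CompleteSpace E] (S : Set E) :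
    ProperCone.innerDual (closure S) = ProperCone.innerDual S := by
  refine le_antisymm (fun y hy z hz => hy (subset_closure hz)) ?_
  intro y hy z hz
  have hcl : IsClosed {z : E | 0 ≤ (inner ℝ z y : ℝ)} :=
    isClosed_le continuous_const (continuous_id.inner continuous_const)
  exact closure_minimal (fun w hw => hy hw) hcl hz

end inner

/-- For a convex cone `C` and `x ∈ C` with minimal face `F = face(x, C)`:
the cone of feasible directions satisfies `dir(x, C) = C + span F`, and the tangent
cone satisfies `tcone(x, C) = (F^△)*`, where `F^△ = C* ∩ F^⊥`. -/
theorem dir_and_tangent_cone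
    {E : Type*} [NormedAddCommGroup E] [InnerProductSpace ℝ E]
    [FiniteDimensional ℝ E]
    (C : Set E) (hconv : Convex ℝ C) (hcone : ∀ y ∈ C, ∀ t : ℝ, 0 ≤ t → t • y ∈ C)
    (x : E) (hx : x ∈ C) :
    ({v : E | ∃ ε : ℝ, 0 < ε ∧ x + ε • v ∈ C}
        = C + (Submodule.span ℝ (minFace {x} C) : Set E)) ∧
    (closure {v : E | ∃ ε : ℝ, 0 < ε ∧ x + ε • v ∈ C}
        = polarCone (polarCone C ∩
            {y : E | ∀ z ∈ minFace {x} C, (inner ℝ y z : ℝ) = 0})) := by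
  have hF : IsFaceOf (minFace {x} C) C := minFace_isFaceOf hconv hx
  have hxF : x ∈ minFace {x} C := mem_minFace_self hx
  set F := minFace {x} C with hFdef
  -- Part 1
  have h1 : {v : E | ∃ ε : ℝ, 0 < ε ∧ x + ε • v ∈ C}
      = C + (Submodule.span ℝ F : Set E) := by
    ext v
    constructor
    · rintro ⟨ε, hε, hvC⟩
      refine Set.mem_add.2 ⟨ε⁻¹ • (x + ε • v), hcone _ hvC ε⁻¹ (by positivity),
        -(ε⁻¹ • x), neg_mem (Submodule.subset_span
          (face_smul_mem hcone hF hxF (by positivity))), ?_⟩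
      match_scalars <;> field_simp <;> ring
    · intro hv
      obtain ⟨c, hc, w, hw, rfl⟩ := Set.mem_add.1 hv
      obtain ⟨a, haF, b, hbF, rfl⟩ := span_face_eq hcone hF hxF hw
      obtain ⟨hbC, ε, hε, hb'⟩ := minFace_mem_G hcone hconv hx hbF
      have hu : (x + ε • (x - b)) + ε • c + ε • a ∈ C :=
        addC hcone hconv (addC hcone hconv hb' (hcone c hc ε hε.le))
          (hcone a (hF.1 haF) ε hε.le)
      have hu' : (1 + ε)⁻¹ • ((x + ε • (x - b)) + ε • c + ε • a) ∈ C :=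
        hcone _ hu _ (by positivity)
      refine ⟨ε / (1 + ε), by positivity, ?_⟩
      have key : x + (ε / (1 + ε)) • (c + (a - b))
          = (1 + ε)⁻¹ • ((x + ε • (x - b)) + ε • c + ε • a) := by
        match_scalars <;> (field_simp; try ring)
      rw [key]; exact hu'
  refine ⟨h1, ?_⟩
  rw [h1]
  set D : Set E := C + (Submodule.span ℝ F : Set E) with hDdef
  have h0C : (0 : E) ∈ C := by simpa using hcone x hx 0 le_rfl
  have h0D : (0 : E) ∈ D := ⟨0, h0C, 0, Submodule.zero_mem _, add_zero 0⟩
  -- Step A : polarCone C ∩ F^⊥ = polarCone D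
  have hA : polarCone C ∩ {y : E | ∀ z ∈ F, (inner ℝ y z : ℝ) = 0} = polarCone D := by
    ext y
    constructor
    · rintro ⟨hyC, hyP⟩ d hd
      obtain ⟨c, hc, w, hw, rfl⟩ := Set.mem_add.1 hd
      have hwy : (inner ℝ y w : ℝ) = 0 := by
        have hle : Submodule.span ℝ F ≤ LinearMap.ker (innerₛₗ ℝ y) :=
          Submodule.span_le.2 fun z hz => LinearMap.mem_ker.2 (hyP z hz)
        exact hle hw
      rw [inner_add_right, hwy, add_zero]
      exact hyC c hc
    · intro hy
      refine ⟨fun c hc => hy c ⟨c, hc, 0, Submodule.zero_mem _, add_zero c⟩, fun z hz => ?_⟩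
      have hzs : z ∈ Submodule.span ℝ F := Submodule.subset_span hz
      have hp := hy z ⟨0, h0C, z, hzs, zero_add z⟩
      have hm := hy (-z) ⟨0, h0C, -z, neg_mem hzs, zero_add (-z)⟩
      rw [inner_neg_right] at hm
      linarith
  haveI : CompleteSpace E := FiniteDimensional.complete ℝ E
  rw [hA, polarCone_eq, polarCone_eq D]
  -- Step B : double dual of D is closure of D
  have hDadd : ∀ a ∈ D, ∀ b ∈ D, a + b ∈ D := by
    rintro _ ⟨a, ha, w, hw, rfl⟩ _ ⟨a', ha', w', hw', rfl⟩
    exact ⟨a + a', addC hcone hconv ha ha', w + w', Submodule.add_mem _ hw hw', add_add_add_comm a a' w w'⟩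
  have hDsmul : ∀ c : ℝ, 0 < c → ∀ v ∈ D, c • v ∈ D := by
    rintro c hc _ ⟨a, ha, w, hw, rfl⟩
    exact ⟨c • a, hcone a ha c hc.le, c • w, Submodule.smul_mem _ c hw, (smul_add c a w).symm⟩
  set K₀ : ConvexCone ℝ E :=
    { carrier := D
      smul_mem' := fun c hc v hv => hDsmul c hc v hv
      add_mem' := fun _ hv _ hw => hDadd _ hv _ hw } with hK₀
  have hKcl : ((K₀.closure : ConvexCone ℝ E) : Set E) = closure D := K₀.coe_closure
  have hpt : K₀.closure.Pointed := by
    show (0 : E) ∈ (K₀.closure : Set E)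
    rw [hKcl]; exact subset_closure h0D
  have hcl : IsClosed ((K₀.closure : ConvexCone ℝ E) : Set E) := by
    rw [hKcl]; exact isClosed_closure
  set K : ProperCone ℝ E :=
    { toSubmodule := K₀.closure.toPointedCone hpt
      isClosed' := hcl } with hK
  have hKcoe : (K : Set E) = closure D := hKcl
  have hdd := ProperCone.innerDual_innerDual K
  rw [hKcoe, innerDualCone_closure_eq D] at hdd
  rw [hdd, hKcoe]
end

section
/- Let L = {1,...,r} and suppose X_L ∈ S^r_+ is a maximum-rank PSD completion of the restriction a_{E_L} of a partial matrix a, and X = [[A, B],[B^T, C]] is any PSD completion of a. Then for all sufficiently large μ, the matrix X_μ = [[X_L, B],[B^T, C + μI]] is a PSD completion of a of maximal rank, namely rank X_L + (n − r). -/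
open Matrix LinearMap

lemma exists_comp_of_ker_le_ker {V W U : Type*} [AddCommGroup V] [Module ℝ V]
    [AddCommGroup W] [Module ℝ W] [AddCommGroup U] [Module ℝ U]
    (f : V →ₗ[ℝ] W) (g : V →ₗ[ℝ] U) (h : LinearMap.ker f ≤ LinearMap.ker g) :
    ∃ h' : W →ₗ[ℝ] U, g = h' ∘ₗ f := by
  obtain ⟨q, hq⟩ := Submodule.exists_isCompl (LinearMap.range f)
  let π : W →ₗ[ℝ] LinearMap.range f := Submodule.linearProjOfIsCompl _ _ hq
  let h₀ : LinearMap.range f →ₗ[ℝ] U :=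
    (Submodule.liftQ (LinearMap.ker f) g h) ∘ₗ (f.quotKerEquivRange).symm.toLinearMap
  refine ⟨h₀ ∘ₗ π, ?_⟩
  ext x
  have h1 : π (f x) = ⟨f x, LinearMap.mem_range_self f x⟩ :=
    Submodule.linearProjOfIsCompl_apply_left hq ⟨f x, LinearMap.mem_range_self f x⟩
  have h2 : (f.quotKerEquivRange).symm ⟨f x, LinearMap.mem_range_self f x⟩
      = Submodule.Quotient.mk x := by
    rw [LinearEquiv.symm_apply_eq]; exact Subtype.ext (f.quotKerEquivRange_apply_mk x).symm
  simp only [LinearMap.comp_apply, h1, h₀, LinearEquiv.coe_coe, h2, Submodule.liftQ_apply]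

/-- matrix factorization: if ker M ≤ ker N (as mulVec), then N = K * M -/
lemma exists_matrix_factor {m n : ℕ} (M : Matrix (Fin n) (Fin n) ℝ) (N : Matrix (Fin m) (Fin n) ℝ)
    (h : ∀ x : Fin n → ℝ, M *ᵥ x = 0 → N *ᵥ x = 0) :
    ∃ K : Matrix (Fin m) (Fin n) ℝ, N = K * M := by
  have hker : LinearMap.ker (Matrix.toLin' M) ≤ LinearMap.ker (Matrix.toLin' N) := by
    intro x hx
    simp only [LinearMap.mem_ker, Matrix.toLin'_apply] at hx ⊢
    exact h x hx
  obtain ⟨h', hh'⟩ := exists_comp_of_ker_le_ker (Matrix.toLin' M) (Matrix.toLin' N) hker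
  refine ⟨LinearMap.toMatrix' h', ?_⟩
  have h2 := congrArg LinearMap.toMatrix' hh'
  rwa [LinearMap.toMatrix'_comp, LinearMap.toMatrix'_toLin', LinearMap.toMatrix'_toLin'] at h2

/-- rank of a block diagonal matrix -/
lemma rank_fromBlocks_diag {r s : ℕ} (A : Matrix (Fin r) (Fin r) ℝ)
    (D : Matrix (Fin s) (Fin s) ℝ) :
    (Matrix.fromBlocks A 0 0 D).rank = A.rank + D.rank := by
  have key : (Matrix.fromBlocks A 0 0 D).mulVecLin =
      ((LinearEquiv.sumArrowLequivProdArrow (Fin r) (Fin s) ℝ ℝ).symm.toLinearMap) ∘ₗ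
        ((A.mulVecLin.prodMap D.mulVecLin) ∘ₗ
          (LinearEquiv.sumArrowLequivProdArrow (Fin r) (Fin s) ℝ ℝ).toLinearMap) := by
    apply LinearMap.ext; intro x
    have hx : x = Sum.elim (x ∘ Sum.inl) (x ∘ Sum.inr) := (Sum.elim_comp_inl_inr x).symm
    funext i
    cases i with
    | inl i =>
      simp [mulVecLin_apply, LinearEquiv.sumArrowLequivProdArrow,
        Equiv.sumArrowEquivProdArrow, mulVec, dotProduct, Fintype.sum_sum_type,
        fromBlocks_apply₁₁, fromBlocks_apply₁₂]
    | inr i =>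
      simp [mulVecLin_apply, LinearEquiv.sumArrowLequivProdArrow,
        Equiv.sumArrowEquivProdArrow, mulVec, dotProduct, Fintype.sum_sum_type,
        fromBlocks_apply₂₁, fromBlocks_apply₂₂]
  rw [Matrix.rank, key]
  rw [LinearMap.range_comp, LinearMap.range_comp_of_range_eq_top _
    (LinearEquiv.range _)]
  rw [LinearEquiv.finrank_map_eq]
  have hr : LinearMap.range (A.mulVecLin.prodMap D.mulVecLin) =
      (LinearMap.range A.mulVecLin).prod (LinearMap.range D.mulVecLin) := by
    ext ⟨u, v⟩
    simp only [LinearMap.mem_range, Submodule.mem_prod, Prod.ext_iff, LinearMap.prodMap_apply]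
    constructor
    · rintro ⟨⟨a, b⟩, h1, h2⟩; exact ⟨⟨a, h1⟩, ⟨b, h2⟩⟩
    · rintro ⟨⟨a, h1⟩, ⟨b, h2⟩⟩; exact ⟨(a, b), h1, h2⟩
  rw [hr, Matrix.rank, Matrix.rank]
  rw [← Module.finrank_prod (R := ℝ)]
  exact LinearEquiv.finrank_eq
    ({ toFun := fun x => (⟨x.1.1, x.2.1⟩, ⟨x.1.2, x.2.2⟩),
       map_add' := fun _ _ => rfl,
       map_smul' := fun _ _ => rfl,
       invFun := fun x => ⟨(x.1.1, x.2.1), ⟨x.1.2, x.2.2⟩⟩,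
       left_inv := fun _ => rfl,
       right_inv := fun _ => rfl } :
      (Submodule.prod (LinearMap.range A.mulVecLin) (LinearMap.range D.mulVecLin)) ≃ₗ[ℝ]
        (LinearMap.range A.mulVecLin × LinearMap.range D.mulVecLin))

lemma posDef_add_smul_one {s : ℕ} {M : Matrix (Fin s) (Fin s) ℝ} (hM : M.IsHermitian)
    {μ : ℝ} (hμ : (∑ i, ∑ j, |M i j|) + 1 ≤ μ) : (M + μ • 1).PosDef := by
  set c := ∑ i, ∑ j, |M i j| with hc
  have hone : ((μ : ℝ) • (1 : Matrix (Fin s) (Fin s) ℝ)).IsHermitian := by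
    simp [Matrix.IsHermitian, Matrix.conjTranspose_smul]
  refine Matrix.PosDef.of_dotProduct_mulVec_pos (hM.add hone) fun x hx => ?_
  have hxx : (0 : ℝ) < x ⬝ᵥ x := by
    rcases lt_or_eq_of_le (Finset.sum_nonneg fun i _ => mul_self_nonneg (x i)) with h | h
    · exact h
    · exact absurd ((dotProduct_self_eq_zero).mp h.symm) hx
  have hsingle : ∀ i, x i * x i ≤ x ⬝ᵥ x := fun i =>
    Finset.single_le_sum (f := fun k => x k * x k) (fun k _ => mul_self_nonneg _)
      (Finset.mem_univ i)
  have hbound : ∀ i j, |x i| * |x j| ≤ x ⬝ᵥ x := by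
    intro i j
    nlinarith [hsingle i, hsingle j, sq_nonneg (|x i| - |x j|), abs_mul_abs_self (x i),
      abs_mul_abs_self (x j)]
  have habs : |x ⬝ᵥ M *ᵥ x| ≤ c * (x ⬝ᵥ x) := by
    have h1 : x ⬝ᵥ M *ᵥ x = ∑ i, ∑ j, x i * (M i j * x j) := by
      simp [dotProduct, mulVec, Finset.mul_sum]
    rw [h1]
    calc |∑ i, ∑ j, x i * (M i j * x j)| ≤ ∑ i, |∑ j, x i * (M i j * x j)| :=
          Finset.abs_sum_le_sum_abs _ _
      _ ≤ ∑ i, ∑ j, |x i * (M i j * x j)| :=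
          Finset.sum_le_sum fun i _ => Finset.abs_sum_le_sum_abs _ _
      _ ≤ ∑ i, ∑ j, |M i j| * (x ⬝ᵥ x) := by
          refine Finset.sum_le_sum fun i _ => Finset.sum_le_sum fun j _ => ?_
          have : |x i * (M i j * x j)| = |M i j| * (|x i| * |x j|) := by
            rw [abs_mul, abs_mul]; ring
          rw [this]
          exact mul_le_mul_of_nonneg_left (hbound i j) (abs_nonneg _)
      _ = c * (x ⬝ᵥ x) := by rw [hc, Finset.sum_mul]; congr 1; ext i; rw [Finset.sum_mul]
  have hquad : star x ⬝ᵥ (M + μ • 1) *ᵥ x = x ⬝ᵥ M *ᵥ x + μ * (x ⬝ᵥ x) := by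
    simp [add_mulVec, smul_mulVec, dotProduct_add, dotProduct_smul, smul_eq_mul]
  rw [hquad]
  have := abs_le.mp habs
  nlinarith [this.1]

lemma posSemidef_fromBlocks_diag {r s : ℕ} {A : Matrix (Fin r) (Fin r) ℝ}
    {D : Matrix (Fin s) (Fin s) ℝ} (hA : A.PosSemidef) (hD : D.PosSemidef) :
    (Matrix.fromBlocks A 0 0 D).PosSemidef := by
  refine Matrix.PosSemidef.of_dotProduct_mulVec_nonneg ?_ ?_
  · rw [Matrix.isHermitian_fromBlocks_iff]
    exact ⟨hA.1, by simp, by simp, hD.1⟩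
  · intro x
    have hx : x = Sum.elim (x ∘ Sum.inl) (x ∘ Sum.inr) := (Sum.elim_comp_inl_inr x).symm
    rw [hx]
    rw [Matrix.fromBlocks_mulVec]
    simp only [Matrix.zero_mulVec, add_zero, zero_add, Function.star_sumElim]
    rw [sumElim_dotProduct_sumElim]
    exact add_nonneg (hA.dotProduct_mulVec_nonneg _) (hD.dotProduct_mulVec_nonneg _)

lemma psd_block_ker {r s : ℕ} {A : Matrix (Fin r) (Fin r) ℝ} {B : Matrix (Fin r) (Fin s) ℝ}
    {Bt : Matrix (Fin s) (Fin r) ℝ} {C : Matrix (Fin s) (Fin s) ℝ}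
    (h : (Matrix.fromBlocks A B Bt C).PosSemidef) {u : Fin r → ℝ} (hu : A *ᵥ u = 0) :
    Bt *ᵥ u = 0 := by
  have h0 : star (Sum.elim u (0 : Fin s → ℝ)) ⬝ᵥ
      (Matrix.fromBlocks A B Bt C) *ᵥ (Sum.elim u 0) = 0 := by
    rw [Matrix.fromBlocks_mulVec]
    simp [Function.star_sumElim, sumElim_dotProduct_sumElim, hu]
  have h1 := (h.dotProduct_mulVec_zero_iff (Sum.elim u 0)).mp h0
  rw [Matrix.fromBlocks_mulVec] at h1
  funext i
  have := congrFun h1 (Sum.inr i)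
  simpa using this

lemma conj_decomp {r s : ℕ} (P : Matrix (Fin r) (Fin r) ℝ) (N : Matrix (Fin r) (Fin s) ℝ)
    (R : Matrix (Fin s) (Fin s) ℝ) :
    Matrix.fromBlocks P (P * N) (Nᵀ * P) R =
      (Matrix.fromBlocks 1 N 0 1)ᵀ * (Matrix.fromBlocks P 0 0 (R - Nᵀ * P * N)) *
        (Matrix.fromBlocks 1 N 0 1) := by
  rw [Matrix.fromBlocks_transpose, Matrix.fromBlocks_multiply, Matrix.fromBlocks_multiply]
  simp [Matrix.mul_assoc]

lemma posSemidef_half {n : ℕ} {M : Matrix (Fin n) (Fin n) ℝ} (hM : M.PosSemidef) :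
    ((1/2 : ℝ) • M).PosSemidef := by
  refine Matrix.PosSemidef.of_dotProduct_mulVec_nonneg ?_ fun x => ?_
  · have h := hM.1
    simp only [Matrix.IsHermitian, Matrix.conjTranspose_smul] at h ⊢
    rw [h]
    norm_num
  · rw [Matrix.smul_mulVec, dotProduct_smul, smul_eq_mul]
    have := hM.dotProduct_mulVec_nonneg x
    positivity

/-- Maximal-rank PSD completions: if `X_L` is a maximum-rank PSD completion of the
restriction of the partial matrix `a` to the looped block `L = Fin r`, and
`X = [[A, B], [Bᵀ, C]]` is any PSD completion of `a`, then for all sufficiently large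
`μ` the matrix `X_μ = [[X_L, B], [Bᵀ, C + μ I]]` is a PSD completion of `a` of
maximal rank, namely `rank X_L + (n - r)`. -/
theorem max_rank_completion {r s : ℕ}
    (E : Set ((Fin r ⊕ Fin s) × (Fin r ⊕ Fin s)))
    (hloops : ∀ v : Fin r ⊕ Fin s, (v, v) ∈ E ↔ ∃ i : Fin r, v = Sum.inl i)
    (hEsym : ∀ p q : Fin r ⊕ Fin s, (p, q) ∈ E → (q, p) ∈ E)
    (a : (Fin r ⊕ Fin s) → (Fin r ⊕ Fin s) → ℝ)
    (XL : Matrix (Fin r) (Fin r) ℝ) (hXL : XL.PosSemidef)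
    (hXLcomp : ∀ i j : Fin r, (Sum.inl i, Sum.inl j) ∈ E →
      XL i j = a (Sum.inl i) (Sum.inl j))
    (hXLmax : ∀ Z : Matrix (Fin r) (Fin r) ℝ, Z.PosSemidef →
      (∀ i j : Fin r, (Sum.inl i, Sum.inl j) ∈ E →
        Z i j = a (Sum.inl i) (Sum.inl j)) → Z.rank ≤ XL.rank)
    (X : Matrix (Fin r ⊕ Fin s) (Fin r ⊕ Fin s) ℝ) (hX : X.PosSemidef)
    (hXcomp : ∀ p q : Fin r ⊕ Fin s, (p, q) ∈ E → X p q = a p q) :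
    ∃ μ₀ : ℝ, ∀ μ : ℝ, μ₀ ≤ μ →
      (Matrix.fromBlocks XL X.toBlocks₁₂ X.toBlocks₂₁
          (X.toBlocks₂₂ + μ • (1 : Matrix (Fin s) (Fin s) ℝ))).PosSemidef ∧
      (∀ p q : Fin r ⊕ Fin s, (p, q) ∈ E →
        Matrix.fromBlocks XL X.toBlocks₁₂ X.toBlocks₂₁
          (X.toBlocks₂₂ + μ • (1 : Matrix (Fin s) (Fin s) ℝ)) p q = a p q) ∧
      (Matrix.fromBlocks XL X.toBlocks₁₂ X.toBlocks₂₁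
          (X.toBlocks₂₂ + μ • (1 : Matrix (Fin s) (Fin s) ℝ))).rank = XL.rank + s ∧
      (∀ Z : Matrix (Fin r ⊕ Fin s) (Fin r ⊕ Fin s) ℝ, Z.PosSemidef →
        (∀ p q : Fin r ⊕ Fin s, (p, q) ∈ E → Z p q = a p q) →
        Z.rank ≤ (Matrix.fromBlocks XL X.toBlocks₁₂ X.toBlocks₂₁
          (X.toBlocks₂₂ + μ • (1 : Matrix (Fin s) (Fin s) ℝ))).rank) := by
  classical
  set A := X.toBlocks₁₁ with hAdef
  set B := X.toBlocks₁₂ with hBdef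
  set Bt := X.toBlocks₂₁ with hBtdef
  set C := X.toBlocks₂₂ with hCdef
  have hfb : Matrix.fromBlocks A B Bt C = X := Matrix.fromBlocks_toBlocks X
  have hA : A.PosSemidef := hX.submatrix Sum.inl
  have hC : C.PosSemidef := hX.submatrix Sum.inr
  have hBt : Bt = Bᵀ := by
    ext i j
    have h := congrFun (congrFun hX.1 (Sum.inr i)) (Sum.inl j)
    simpa [Matrix.conjTranspose_apply, hBdef, hBtdef, Matrix.toBlocks₁₂,
      Matrix.toBlocks₂₁] using h.symm
  -- step 1 : ker XL ≤ ker A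
  have hZpsd : ((1/2 : ℝ) • XL + (1/2 : ℝ) • A).PosSemidef :=
    (posSemidef_half hXL).add (posSemidef_half hA)
  have hZrank := hXLmax _ hZpsd (by
    intro i j hij
    have h1 := hXLcomp i j hij
    have h2 : A i j = a (Sum.inl i) (Sum.inl j) := hXcomp _ _ hij
    simp only [Matrix.add_apply, Matrix.smul_apply, h1, h2, smul_eq_mul]
    ring)
  have hsm : (1/2 : ℝ) • XL + (1/2 : ℝ) • A
      = ((1/2 : ℝ) • (1 : Matrix (Fin r) (Fin r) ℝ)) * (XL + A) := by
    rw [Matrix.smul_mul, Matrix.one_mul, smul_add]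
  have hdetu : IsUnit ((1/2 : ℝ) • (1 : Matrix (Fin r) (Fin r) ℝ)).det := by
    rw [Matrix.det_smul, Matrix.det_one, mul_one]
    exact IsUnit.pow _ (isUnit_iff_ne_zero.mpr (by norm_num))
  have hrank1 : (XL + A).rank ≤ XL.rank := by
    rw [hsm, Matrix.rank_mul_eq_right_of_isUnit_det _ _ hdetu] at hZrank
    exact hZrank
  have hsplit : ∀ x : Fin r → ℝ, (XL + A) *ᵥ x = 0 → XL *ᵥ x = 0 ∧ A *ᵥ x = 0 := by
    intro x hx
    have h0 : star x ⬝ᵥ (XL + A) *ᵥ x = 0 := by rw [hx, dotProduct_zero]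
    rw [Matrix.add_mulVec, dotProduct_add] at h0
    have hXLx := hXL.dotProduct_mulVec_nonneg x
    have hAx := hA.dotProduct_mulVec_nonneg x
    have e1 : star x ⬝ᵥ XL *ᵥ x = 0 := le_antisymm (by linarith) hXLx
    have e2 : star x ⬝ᵥ A *ᵥ x = 0 := by linarith
    exact ⟨(hXL.dotProduct_mulVec_zero_iff x).mp e1, (hA.dotProduct_mulVec_zero_iff x).mp e2⟩
  have hker1 : LinearMap.ker (XL + A).mulVecLin ≤ LinearMap.ker XL.mulVecLin := by
    intro x hx
    exact LinearMap.mem_ker.mpr ((hsplit x (LinearMap.mem_ker.mp hx)).1)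
  have hkereq : LinearMap.ker (XL + A).mulVecLin = LinearMap.ker XL.mulVecLin := by
    apply Submodule.eq_of_le_of_finrank_le hker1
    have h1 := LinearMap.finrank_range_add_finrank_ker (XL + A).mulVecLin
    have h2 := LinearMap.finrank_range_add_finrank_ker XL.mulVecLin
    have hr1 : (XL + A).rank = Module.finrank ℝ (LinearMap.range (XL + A).mulVecLin) := rfl
    have hr2 : XL.rank = Module.finrank ℝ (LinearMap.range XL.mulVecLin) := rfl
    omega
  have hXLB : ∀ u : Fin r → ℝ, XL *ᵥ u = 0 → Bᵀ *ᵥ u = 0 := by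
    intro u hu
    have hmem : u ∈ LinearMap.ker (XL + A).mulVecLin := by
      rw [hkereq]
      exact LinearMap.mem_ker.mpr hu
    have hA0 := (hsplit u (LinearMap.mem_ker.mp hmem)).2
    have h := psd_block_ker (by rw [hfb]; exact hX) hA0
    rwa [hBt] at h
  obtain ⟨Kt, hKt⟩ := exists_matrix_factor XL Bᵀ hXLB
  set K := Ktᵀ with hKdef
  have hXLt : XLᵀ = XL := by
    rw [← Matrix.conjTranspose_eq_transpose_of_trivial]
    exact hXL.1
  have hB : B = XL * K := by
    have h := congrArg Matrix.transpose hKt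
    rwa [Matrix.transpose_transpose, Matrix.transpose_mul, hXLt] at h
  have hKtEq : Kᵀ = Kt := by rw [hKdef, Matrix.transpose_transpose]
  have hBt2 : Bt = Kᵀ * XL := by rw [hBt, hKt, hKtEq]
  set Mm := C - Kᵀ * XL * K with hMmdef
  have hMmH : Mm.IsHermitian := by
    apply Matrix.IsHermitian.sub hC.1
    have h := Matrix.isHermitian_conjTranspose_mul_mul K hXL.1
    rwa [Matrix.conjTranspose_eq_transpose_of_trivial] at h
  refine ⟨(∑ i, ∑ j, |Mm i j|) + 1, fun μ hμ => ?_⟩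
  have hSpd : (Mm + μ • 1).PosDef := posDef_add_smul_one hMmH hμ
  have hSeq : C + μ • (1 : Matrix (Fin s) (Fin s) ℝ) - Kᵀ * XL * K = Mm + μ • 1 := by
    rw [hMmdef]; abel
  have hU : Matrix.fromBlocks XL B Bt (C + μ • 1) =
      (Matrix.fromBlocks 1 K 0 1)ᵀ *
        (Matrix.fromBlocks XL 0 0 (Mm + μ • 1)) * (Matrix.fromBlocks 1 K 0 1) := by
    rw [hB, hBt2, ← hSeq]
    exact conj_decomp XL K (C + μ • 1)
  have hdetU : IsUnit (Matrix.fromBlocks (1 : Matrix (Fin r) (Fin r) ℝ) K 0 1).det := by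
    rw [Matrix.det_fromBlocks_zero₂₁, Matrix.det_one, Matrix.det_one, mul_one]
    exact isUnit_one
  have hdetUT : IsUnit ((Matrix.fromBlocks (1 : Matrix (Fin r) (Fin r) ℝ) K 0 1)ᵀ).det := by
    rwa [Matrix.det_transpose]
  have hGpsd : (Matrix.fromBlocks XL B Bt (C + μ • 1)).PosSemidef := by
    rw [hU]
    have hDpsd : (Matrix.fromBlocks XL 0 0 (Mm + μ • 1)).PosSemidef :=
      posSemidef_fromBlocks_diag hXL hSpd.posSemidef
    have h := hDpsd.conjTranspose_mul_mul_same (Matrix.fromBlocks (1 : Matrix (Fin r) (Fin r) ℝ) K 0 1)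
    rwa [Matrix.conjTranspose_eq_transpose_of_trivial] at h
  have hGrank : (Matrix.fromBlocks XL B Bt (C + μ • 1)).rank = XL.rank + s := by
    rw [hU, Matrix.rank_mul_eq_left_of_isUnit_det _ _ hdetU,
      Matrix.rank_mul_eq_right_of_isUnit_det _ _ hdetUT, rank_fromBlocks_diag]
    congr 1
    have hdet : IsUnit (Mm + μ • (1 : Matrix (Fin s) (Fin s) ℝ)) := by
      rw [Matrix.isUnit_iff_isUnit_det]
      exact isUnit_iff_ne_zero.mpr (ne_of_gt hSpd.det_pos)
    rw [Matrix.rank_of_isUnit _ hdet, Fintype.card_fin]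
  refine ⟨hGpsd, ?_, hGrank, ?_⟩
  · rintro (i | i) (j | j) hpq
    · simpa using hXLcomp i j hpq
    · simpa [hBdef, Matrix.toBlocks₁₂] using hXcomp _ _ hpq
    · simpa [hBtdef, Matrix.toBlocks₂₁] using hXcomp _ _ hpq
    · have hne : i ≠ j := by
        rintro rfl
        obtain ⟨k, hk⟩ := (hloops (Sum.inr i)).mp hpq
        simp at hk
      have h2 : X (Sum.inr i) (Sum.inr j) = a (Sum.inr i) (Sum.inr j) := hXcomp _ _ hpq
      simp [Matrix.fromBlocks_apply₂₂, Matrix.add_apply, Matrix.smul_apply,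
        Matrix.one_apply, hne, hCdef, Matrix.toBlocks₂₂, h2]
  · intro Z hZ hZc
    set Pz := Z.toBlocks₁₁ with hPzdef
    set Qz := Z.toBlocks₁₂ with hQzdef
    set Qtz := Z.toBlocks₂₁ with hQtzdef
    set Rz := Z.toBlocks₂₂ with hRzdef
    have hfbZ : Matrix.fromBlocks Pz Qz Qtz Rz = Z := Matrix.fromBlocks_toBlocks Z
    have hPpsd : Pz.PosSemidef := hZ.submatrix Sum.inl
    have hPrank : Pz.rank ≤ XL.rank := hXLmax _ hPpsd (fun i j hij => hZc _ _ hij)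
    have hQt : Qtz = Qzᵀ := by
      ext i j
      have h := congrFun (congrFun hZ.1 (Sum.inr i)) (Sum.inl j)
      simpa [Matrix.conjTranspose_apply, hQzdef, hQtzdef, Matrix.toBlocks₁₂,
        Matrix.toBlocks₂₁] using h.symm
    have hkerP : ∀ u : Fin r → ℝ, Pz *ᵥ u = 0 → Qzᵀ *ᵥ u = 0 := by
      intro u hu
      have h := psd_block_ker (by rw [hfbZ]; exact hZ) hu
      rwa [hQt] at h
    obtain ⟨Nt, hNt⟩ := exists_matrix_factor Pz Qzᵀ hkerP
    set N := Ntᵀ with hNdef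
    have hPt : Pzᵀ = Pz := by
      rw [← Matrix.conjTranspose_eq_transpose_of_trivial]
      exact hPpsd.1
    have hQ : Qz = Pz * N := by
      have h := congrArg Matrix.transpose hNt
      rwa [Matrix.transpose_transpose, Matrix.transpose_mul, hPt] at h
    have hNtEq : Nᵀ = Nt := by rw [hNdef, Matrix.transpose_transpose]
    have hQt2 : Qtz = Nᵀ * Pz := by rw [hQt, hNt, hNtEq]
    have hdetV : IsUnit (Matrix.fromBlocks (1 : Matrix (Fin r) (Fin r) ℝ) N 0 1).det := by
      rw [Matrix.det_fromBlocks_zero₂₁, Matrix.det_one, Matrix.det_one, mul_one]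
      exact isUnit_one
    have hdetVT : IsUnit ((Matrix.fromBlocks (1 : Matrix (Fin r) (Fin r) ℝ) N 0 1)ᵀ).det := by
      rwa [Matrix.det_transpose]
    have hZrk : Z.rank = Pz.rank + (Rz - Nᵀ * Pz * N).rank := by
      conv_lhs => rw [← hfbZ]
      rw [hQ, hQt2, conj_decomp, Matrix.rank_mul_eq_left_of_isUnit_det _ _ hdetV,
        Matrix.rank_mul_eq_right_of_isUnit_det _ _ hdetVT, rank_fromBlocks_diag]
    rw [hGrank, hZrk]
    exact add_le_add hPrank (Matrix.rank_le_height _)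
end

section
/- Let χ ⊆ L be a clique in G, a ∈ R^E a partial PSD matrix, and F_χ = {X ∈ S^n_+ : X_ij = a_ij for all ij ∈ E(χ)}. If v_χ ∈ S^χ_+ exposes the minimal face face(a_χ, S^χ_+), then the n×n matrix P*_χ(v_χ) (equal to v_χ on the χ×χ block and zero elsewhere) exposes the minimal face face(F_χ, S^n_+). -/
namespace CliqueFR

section general

variable {M : Type*} [AddCommGroup M] [Module ℝ M]

/-- Shrinking the perturbation parameter stays in a convex set. -/
lemma shrink {C : Set M} (hC : Convex ℝ C) {a x : M} (ha : a ∈ C) {s t : ℝ}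
    (ht : 0 ≤ t) (hts : t ≤ s) (hs : 0 < s) (hz : a + s • (a - x) ∈ C) :
    a + t • (a - x) ∈ C := by
  have hs0 : s ≠ 0 := ne_of_gt hs
  have h1 : (0:ℝ) ≤ t / s := div_nonneg ht hs.le
  have h2 : (0:ℝ) ≤ 1 - t / s := by
    rw [sub_nonneg]
    exact (div_le_one hs).mpr hts
  have hmem := hC hz ha h1 h2 (by ring)
  convert hmem using 1
  match_scalars <;> (field_simp; try ring)

lemma exists_scale_of_comb {C : Set M} (hC : Convex ℝ C) {a x y : M} (hx : x ∈ C) (hy : y ∈ C)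
    {t s : ℝ} (ht0 : 0 < t) (ht1 : t < 1) (hs : 0 < s)
    (hz : a + s • (a - (t • x + (1 - t) • y)) ∈ C) :
    ∃ s' : ℝ, 0 < s' ∧ a + s' • (a - x) ∈ C := by
  have hd : 0 < 1 + s * (1 - t) := by nlinarith
  set α : ℝ := 1 / (1 + s * (1 - t)) with hα
  have hαpos : 0 < α := by rw [hα]; exact one_div_pos.mpr hd
  have hα0 : 0 ≤ α := hαpos.le
  have hα1 : 0 ≤ 1 - α := by
    rw [sub_nonneg, hα]
    rw [div_le_one hd]
    nlinarith
  refine ⟨α * s * t, mul_pos (mul_pos hαpos hs) ht0, ?_⟩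
  have hmem := hC hz hy hα0 hα1 (by ring)
  convert hmem using 1
  match_scalars <;> (simp only [hα]; field_simp; try ring)

/-- The minimal face of a point `a` in a convex set `C` is contained in the set of
points `x` such that `a` can be pushed slightly past `x` while staying in `C`. -/
lemma minFace_singleton_subset {C : Set M} (hC : Convex ℝ C) {a : M} (ha : a ∈ C) :
    minFace {a} C ⊆ {x | x ∈ C ∧ ∃ s : ℝ, 0 < s ∧ a + s • (a - x) ∈ C} := by
  apply Set.sInter_subset_of_mem
  refine ⟨⟨fun x hx => hx.1, ?_, ?_⟩, ?_⟩
  · -- convexity of the candidate face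
    rintro x ⟨hxC, sx, hsx, hzx⟩ y ⟨hyC, sy, hsy, hzy⟩ p q hp hq hpq
    have hq' : q = 1 - p := by linarith
    subst hq'
    have hm : 0 < min sx sy := lt_min hsx hsy
    refine ⟨hC hxC hyC hp hq hpq, min sx sy, hm, ?_⟩
    have hx' := shrink hC ha hm.le (min_le_left _ _) hsx hzx
    have hy' := shrink hC ha hm.le (min_le_right _ _) hsy hzy
    have hmem := hC hx' hy' hp hq hpq
    convert hmem using 1
    match_scalars <;> ring
  · -- face property
    rintro x hx y hy t ht ⟨hwC, s, hs, hz⟩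
    have hz' : a + s • (a - ((1 - t) • y + (1 - (1 - t)) • x)) ∈ C := by
      convert hz using 4
      module
    exact ⟨⟨hx, exists_scale_of_comb hC hx hy ht.1 ht.2 hs hz⟩,
           ⟨hy, exists_scale_of_comb hC hy hx (by linarith [ht.2]) (by linarith [ht.1]) hs hz'⟩⟩
  · exact Set.singleton_subset_iff.mpr ⟨ha, 1, one_pos, by simpa using ha⟩

end general

section matrices

open Matrix

lemma posSemidef_smul {m : Type*} [Fintype m] {A : Matrix m m ℝ} (hA : A.PosSemidef)
    {c : ℝ} (hc : 0 ≤ c) : (c • A).PosSemidef := by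
  refine Matrix.posSemidef_iff_dotProduct_mulVec.mpr ⟨?_, fun x => ?_⟩
  · unfold Matrix.IsHermitian
    rw [conjTranspose_smul, hA.1.eq]
    simp
  · rw [smul_mulVec, dotProduct_smul, smul_eq_mul]
    exact mul_nonneg hc (hA.dotProduct_mulVec_nonneg x)

lemma convex_posSemidef {m : Type*} [Fintype m] :
    Convex ℝ {A : Matrix m m ℝ | A.PosSemidef} := fun _ hx _ hy _ _ hp hq _ =>
  (posSemidef_smul hx hp).add (posSemidef_smul hy hq)

lemma psd_trace_nonneg {m : Type*} [Fintype m] [DecidableEq m] {A : Matrix m m ℝ}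
    (hA : A.PosSemidef) : 0 ≤ Matrix.trace A := by
  apply Finset.sum_nonneg
  intro i _
  simpa [Matrix.mulVec_single, dotProduct, Pi.single_apply] using hA.dotProduct_mulVec_nonneg (Pi.single i 1)

lemma trace_mul_nonneg {m : Type*} [Fintype m] [DecidableEq m] {A B : Matrix m m ℝ}
    (hA : A.PosSemidef) (hB : B.PosSemidef) : 0 ≤ Matrix.trace (A * B) := by
  obtain ⟨C, rfl⟩ : ∃ C : Matrix m m ℝ, A = Cᴴ * C := by
    open scoped MatrixOrder in
    exact CStarAlgebra.nonneg_iff_eq_star_mul_self.mp hA.nonneg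
  rw [Matrix.mul_assoc, Matrix.trace_mul_comm]
  exact psd_trace_nonneg (hB.mul_mul_conjTranspose_same C)

variable {n : ℕ} (χ : Finset (Fin n))

/-- Zero-pad a `χ × χ` matrix to an `n × n` matrix. -/
def pad (B : Matrix χ χ ℝ) : Matrix (Fin n) (Fin n) ℝ :=
  Matrix.of fun i j : Fin n =>
    if hi : i ∈ χ then if hj : j ∈ χ then B ⟨i, hi⟩ ⟨j, hj⟩ else 0 else 0

lemma sum_pad (B : Matrix χ χ ℝ) (f : Fin n → Fin n → ℝ) :
    ∑ i, ∑ j, pad χ B i j * f i j = ∑ i : χ, ∑ j : χ, B i j * f i j := by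
  have h1 : ∀ (i : χ) (j : χ), pad χ B i j * f i j = B i j * f i j := by
    intro i j
    simp [pad, i.2, j.2]
  calc ∑ i, ∑ j, pad χ B i j * f i j
      = ∑ i ∈ χ, ∑ j, pad χ B i j * f i j := by
        refine (Finset.sum_subset χ.subset_univ fun i _ hi => ?_).symm
        exact Finset.sum_eq_zero fun j _ => by simp [pad, hi]
    _ = ∑ i ∈ χ, ∑ j ∈ χ, pad χ B i j * f i j := by
        refine Finset.sum_congr rfl fun i hi => ?_
        refine (Finset.sum_subset χ.subset_univ fun j _ hj => ?_).symm
        simp [pad, hj]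
    _ = ∑ i : χ, ∑ j : χ, pad χ B i j * f i j := by
        rw [← Finset.sum_coe_sort χ (fun i => ∑ j ∈ χ, pad χ B i j * f i j)]
        exact Finset.sum_congr rfl fun i _ =>
          (Finset.sum_coe_sort χ (fun j => pad χ B (↑i) j * f (↑i) j)).symm
    _ = ∑ i : χ, ∑ j : χ, B i j * f i j := by
        exact Finset.sum_congr rfl fun i _ => Finset.sum_congr rfl fun j _ => h1 i j

lemma pad_posSemidef {B : Matrix χ χ ℝ} (hB : B.PosSemidef) : (pad χ B).PosSemidef := by
  refine Matrix.posSemidef_iff_dotProduct_mulVec.mpr ⟨?_, ?_⟩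
  · -- Hermitian
    ext i j
    simp only [conjTranspose_apply, star_trivial, pad, Matrix.of_apply]
    by_cases hi : i ∈ χ <;> by_cases hj : j ∈ χ <;> simp [hi, hj]
    simpa using hB.1.apply ⟨i, hi⟩ ⟨j, hj⟩
  · intro x
    have key : star x ⬝ᵥ pad χ B *ᵥ x
        = star (fun i : χ => x i) ⬝ᵥ B *ᵥ (fun i : χ => x i) := by
      simp only [dotProduct, Matrix.mulVec, Pi.star_apply, star_trivial]
      calc ∑ i, x i * ∑ j, pad χ B i j * x j
          = ∑ i, ∑ j, pad χ B i j * (x j * x i) := by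
            refine Finset.sum_congr rfl fun i _ => ?_
            rw [Finset.mul_sum]
            exact Finset.sum_congr rfl fun j _ => by ring
        _ = ∑ i : χ, ∑ j : χ, B i j * (x j * x i) := sum_pad χ B (fun i j => x j * x i)
        _ = ∑ i : χ, x i * ∑ j : χ, B i j * x j := by
            refine Finset.sum_congr rfl fun i _ => ?_
            rw [Finset.mul_sum]
            exact Finset.sum_congr rfl fun j _ => by ring
    rw [key]
    exact hB.dotProduct_mulVec_nonneg _

lemma trace_pad_mul (B : Matrix χ χ ℝ) (X : Matrix (Fin n) (Fin n) ℝ) :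
    Matrix.trace (pad χ B * X) = Matrix.trace (B * (Matrix.of fun i j : χ => X i j)) := by
  simp only [Matrix.trace, Matrix.diag, Matrix.mul_apply, Matrix.of_apply]
  exact sum_pad χ B (fun i j => X j i)

end matrices

end CliqueFR

open CliqueFR in
/-- Clique facial reduction for PSD completions. -/
theorem clique_facial_reduction_psd {n : ℕ} (E : Set (Fin n × Fin n))
    (hEsym : ∀ i j : Fin n, (i, j) ∈ E → (j, i) ∈ E)
    (χ : Finset (Fin n))
    (hχL : ∀ i ∈ χ, (i, i) ∈ E)
    (hclique : ∀ i ∈ χ, ∀ j ∈ χ, (i, j) ∈ E)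
    (a : Fin n → Fin n → ℝ)
    (hpartial : ∀ S : Finset (Fin n), (∀ i ∈ S, ∀ j ∈ S, (i, j) ∈ E) →
      Matrix.PosSemidef (Matrix.of fun i j : S => a i.val j.val))
    (vχ : Matrix χ χ ℝ) (hvχ : vχ.PosSemidef)
    (hexpose : minFace {Matrix.of fun i j : χ => a i.val j.val}
        {A : Matrix χ χ ℝ | A.PosSemidef}
      = {A : Matrix χ χ ℝ | A.PosSemidef ∧ Matrix.trace (vχ * A) = 0}) :
    (Matrix.of fun i j : Fin n =>
        if hi : i ∈ χ then if hj : j ∈ χ then vχ ⟨i, hi⟩ ⟨j, hj⟩ else 0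
        else 0).PosSemidef ∧
    minFace {X : Matrix (Fin n) (Fin n) ℝ | X.PosSemidef ∧
        ∀ i ∈ χ, ∀ j ∈ χ, X i j = a i j}
        {X : Matrix (Fin n) (Fin n) ℝ | X.PosSemidef}
      = {X : Matrix (Fin n) (Fin n) ℝ | X.PosSemidef ∧
          Matrix.trace ((Matrix.of fun i j : Fin n =>
            if hi : i ∈ χ then if hj : j ∈ χ then vχ ⟨i, hi⟩ ⟨j, hj⟩ else 0
            else 0) * X) = 0} := by
  classical
  have hVdef : (Matrix.of fun i j : Fin n =>
      if hi : i ∈ χ then if hj : j ∈ χ then vχ ⟨i, hi⟩ ⟨j, hj⟩ else 0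
      else 0) = pad χ vχ := rfl
  rw [hVdef]
  set aχ : Matrix χ χ ℝ := Matrix.of fun i j : χ => a i.val j.val with haχdef
  have haχpsd : aχ.PosSemidef := hpartial χ hclique
  have hVpsd : (pad χ vχ).PosSemidef := pad_posSemidef χ hvχ
  refine ⟨hVpsd, ?_⟩
  -- trace (vχ * aχ) = 0
  have haχ0 : Matrix.trace (vχ * aχ) = 0 := by
    have h1 : aχ ∈ minFace {aχ} {A : Matrix χ χ ℝ | A.PosSemidef} :=
      Set.mem_sInter.mpr fun F hF => hF.2 rfl
    rw [hexpose] at h1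
    exact h1.2
  -- the exposed set is a face
  have hEVface : IsFaceOf
      {X : Matrix (Fin n) (Fin n) ℝ | X.PosSemidef ∧ Matrix.trace (pad χ vχ * X) = 0}
      {X : Matrix (Fin n) (Fin n) ℝ | X.PosSemidef} := by
    refine ⟨fun X hX => hX.1, ?_, ?_⟩
    · rintro x ⟨hx, hx0⟩ y ⟨hy, hy0⟩ p q hp hq hpq
      refine ⟨(posSemidef_smul hx hp).add (posSemidef_smul hy hq), ?_⟩
      simp [Matrix.mul_add, Matrix.mul_smul, Matrix.trace_add, Matrix.trace_smul, hx0, hy0]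
    · rintro x hx y hy t ht hmem
      have h1 : 0 ≤ Matrix.trace (pad χ vχ * x) := trace_mul_nonneg hVpsd hx
      have h2 : 0 ≤ Matrix.trace (pad χ vχ * y) := trace_mul_nonneg hVpsd hy
      have h3 : t * Matrix.trace (pad χ vχ * x)
          + (1 - t) * Matrix.trace (pad χ vχ * y) = 0 := by
        have := hmem.2
        simpa [Matrix.mul_add, Matrix.mul_smul, Matrix.trace_add, Matrix.trace_smul,
          smul_eq_mul] using this
      obtain ⟨ht0, ht1⟩ := ht
      exact ⟨⟨hx, by nlinarith⟩, ⟨hy, by nlinarith⟩⟩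
  -- F_χ is contained in the exposed set
  have hsub : {X : Matrix (Fin n) (Fin n) ℝ | X.PosSemidef ∧
        ∀ i ∈ χ, ∀ j ∈ χ, X i j = a i j}
      ⊆ {X : Matrix (Fin n) (Fin n) ℝ | X.PosSemidef ∧
        Matrix.trace (pad χ vχ * X) = 0} := by
    rintro X ⟨hX, hXa⟩
    refine ⟨hX, ?_⟩
    rw [trace_pad_mul]
    have hXχ : (Matrix.of fun i j : χ => X i j) = aχ := by
      ext i j
      simpa [haχdef] using hXa i i.2 j j.2
    rw [hXχ]
    exact haχ0
  apply Set.Subset.antisymm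
  · exact Set.sInter_subset_of_mem ⟨hEVface, hsub⟩
  · rintro X ⟨hXpsd, htr⟩
    apply Set.mem_sInter.mpr
    rintro F ⟨hFface, hFsub⟩
    -- the χ-submatrix of X lies in the minimal face of aχ
    have hXχmem : (Matrix.of fun i j : χ => X i j)
        ∈ minFace {aχ} {A : Matrix χ χ ℝ | A.PosSemidef} := by
      rw [hexpose]
      exact ⟨hXpsd.submatrix Subtype.val, by rw [← trace_pad_mul]; exact htr⟩
    obtain ⟨-, s, hs, hD0⟩ := minFace_singleton_subset convex_posSemidef haχpsd hXχmem
    have h1s : (0:ℝ) < 1 + s := by linarith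
    set ε : ℝ := s / (1 + s) with hεdef
    have hε0 : 0 < ε := div_pos hs h1s
    have hε1 : ε < 1 := (div_lt_one h1s).mpr (by linarith)
    set Xχ : Matrix χ χ ℝ := Matrix.of fun i j : χ => X i j with hXχdef
    have hD : (aχ - ε • Xχ).PosSemidef := by
      have h : aχ - ε • Xχ = (1 / (1 + s)) • (aχ + s • (aχ - Xχ)) := by
        match_scalars <;> (field_simp [hεdef, h1s.ne']; try (rw [hεdef, div_mul_cancel₀ s h1s.ne']))
      rw [h]
      exact posSemidef_smul hD0 (div_nonneg zero_le_one h1s.le)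
    have hYmem : pad χ (aχ - ε • Xχ) + ε • X ∈ F := by
      apply hFsub
      refine ⟨(pad_posSemidef χ hD).add (posSemidef_smul hXpsd hε0.le), ?_⟩
      intro i hi j hj
      simp only [Matrix.add_apply, Matrix.smul_apply, pad, Matrix.of_apply, dif_pos hi,
        dif_pos hj, Matrix.sub_apply, smul_eq_mul, hXχdef, haχdef]
      ring
    have hz : ((1 - ε)⁻¹ • pad χ (aχ - ε • Xχ)) ∈
        {X : Matrix (Fin n) (Fin n) ℝ | X.PosSemidef} :=
      posSemidef_smul (pad_posSemidef χ hD) (inv_nonneg.mpr (by linarith))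
    refine (hFface.2.2 X hXpsd _ hz ε ⟨hε0, hε1⟩ ?_).1
    have hcomb : ε • X + (1 - ε) • ((1 - ε)⁻¹ • pad χ (aχ - ε • Xχ))
        = pad χ (aχ - ε • Xχ) + ε • X := by
      rw [smul_inv_smul₀ (by linarith : (1:ℝ) - ε ≠ 0)]
      exact add_comm _ _
    rw [hcomb]
    exact hYmem
end

section
/- The partial matrix on the 4-cycle with loops given by diagonal entries 1+ε, entries a_12 = a_23 = a_34 = 1 and a_14 = −1, is PSD completable if and only if ε ≥ √2 − 1; in particular at ε = √2 − 1 it lies on the boundary of P(S^4_+) and every specified principal 2×2 submatrix is positive definite for ε > 0. -/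
open Real Matrix

set_option maxHeartbeats 1000000 in
private lemma aux_mem (ε : ℝ) :
    (∃ X : Matrix (Fin 4) (Fin 4) ℝ, X.PosSemidef ∧
        (∀ i : Fin 4, X i i = 1 + ε) ∧
        X 0 1 = 1 ∧ X 1 2 = 1 ∧ X 2 3 = 1 ∧ X 0 3 = -1) ↔ Real.sqrt 2 - 1 ≤ ε := by
  have hr2 : Real.sqrt 2 * Real.sqrt 2 = 2 := Real.mul_self_sqrt (by norm_num)
  have hrpos : (0:ℝ) < Real.sqrt 2 := Real.sqrt_pos.mpr (by norm_num)
  set r := Real.sqrt 2 with hr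
  constructor
  · rintro ⟨X, hX, hd, h01, h12, h23, h03⟩
    have h10 : X 1 0 = 1 := by rw [← hX.1.apply 1 0]; simpa using h01
    have h21 : X 2 1 = 1 := by rw [← hX.1.apply 2 1]; simpa using h12
    have h32 : X 3 2 = 1 := by rw [← hX.1.apply 3 2]; simpa using h23
    have h30 : X 3 0 = -1 := by rw [← hX.1.apply 3 0]; simpa using h03
    have h20 : X 2 0 = X 0 2 := by rw [← hX.1.apply 2 0]; simp
    have h31 : X 3 1 = X 1 3 := by rw [← hX.1.apply 3 1]; simp
    set x := X 0 2 with hx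
    set y := X 1 3 with hy
    have hA := hX.dotProduct_mulVec_nonneg ![1, 1 - r, 1 - r, 1]
    have hB := hX.dotProduct_mulVec_nonneg ![1, -(1 + r), 1 + r, -1]
    simp only [dotProduct, Matrix.mulVec, Fin.sum_univ_four, star_trivial,
      Matrix.cons_val_zero, Matrix.cons_val_one, Matrix.head_cons,
      Matrix.cons_val_two, Matrix.tail_cons, Matrix.cons_val_three,
      Pi.star_apply] at hA hB
    rw [hd 0, hd 1, hd 2, hd 3, h01, h12, h23, h03, h10, h21, h32, h30, h20, h31,
      ← hx, ← hy] at hA hB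
    have hP := mul_nonneg (by positivity : (0:ℝ) ≤ 1 + r) hA
    have hQ := mul_nonneg (by nlinarith : (0:ℝ) ≤ r - 1) hB
    have key : 0 ≤ 8 * r * (1 + ε) - 16 := by nlinarith [hP, hQ, hr2]
    nlinarith [key, hr2, hrpos]
  · intro h
    refine ⟨!![1+ε, 1, 0, -1; 1, 1+ε, 1, 0; 0, 1, 1+ε, 1; -1, 0, 1, 1+ε], posSemidef_iff_dotProduct_mulVec.mpr ⟨?_, ?_⟩, ?_, ?_, ?_, ?_, ?_⟩
    · ext i j
      fin_cases i <;> fin_cases j <;> simp [Matrix.conjTranspose_apply]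
    · intro v
      simp only [dotProduct, Matrix.mulVec, Fin.sum_univ_four, star_trivial,
        Matrix.cons_val_zero, Matrix.cons_val_one, Matrix.head_cons,
        Matrix.cons_val_two, Matrix.tail_cons, Matrix.cons_val_three, Pi.star_apply,
        Matrix.cons_val', Matrix.cons_val_fin_one, Matrix.empty_val',
        Matrix.head_fin_const, Matrix.of_apply]
      have heq : (1+ε)*((v 0)^2+(v 1)^2+(v 2)^2+(v 3)^2)
            + 2*(v 0 * v 1 + v 1 * v 2 + v 2 * v 3 - v 0 * v 3)
          = (1+ε-r)*((v 0)^2+(v 1)^2+(v 2)^2+(v 3)^2)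
            + (r/2)*(v 0 + r * v 1 + v 2)^2 + (r/4)*(r * v 2 - r * v 0 + 2 * v 3)^2 := by
        linear_combination (-(r/4)*((v 0)^2+(v 2)^2) - (r/2)*(v 1)^2 + (r/2)*(v 0)*(v 2)
          - v 0 * v 1 - v 1 * v 2 - v 2 * v 3 + v 0 * v 3) * hr2
      have h1 : (0:ℝ) ≤ 1 + ε - r := by linarith
      have hRHS : 0 ≤ (1+ε-r)*((v 0)^2+(v 1)^2+(v 2)^2+(v 3)^2)
            + (r/2)*(v 0 + r * v 1 + v 2)^2 + (r/4)*(r * v 2 - r * v 0 + 2 * v 3)^2 := by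
        have hs : (0:ℝ) ≤ (v 0)^2+(v 1)^2+(v 2)^2+(v 3)^2 := by positivity
        have hr4 : (0:ℝ) ≤ r/4 := by positivity
        have hr2' : (0:ℝ) ≤ r/2 := by positivity
        exact add_nonneg (add_nonneg (mul_nonneg h1 hs)
          (mul_nonneg hr2' (sq_nonneg _))) (mul_nonneg hr4 (sq_nonneg _))
      linarith [heq, hRHS]
    · intro i; fin_cases i <;> norm_num
    all_goals simp

/-- The partial matrix on the 4-cycle with loops, with diagonal entries `1 + ε`,
`a₁₂ = a₂₃ = a₃₄ = 1` and `a₁₄ = -1`, is PSD completable if and only if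
`ε ≥ √2 - 1`; in particular at `ε = √2 - 1` it lies on the boundary of the set of
completable data, and every specified `2 × 2` principal submatrix is positive
definite for `ε > 0`. -/
theorem four_cycle_completion :
    ({ε : ℝ | ∃ X : Matrix (Fin 4) (Fin 4) ℝ, X.PosSemidef ∧
        (∀ i : Fin 4, X i i = 1 + ε) ∧
        X 0 1 = 1 ∧ X 1 2 = 1 ∧ X 2 3 = 1 ∧ X 0 3 = -1}
      = Set.Ici (Real.sqrt 2 - 1)) ∧
    (Real.sqrt 2 - 1) ∈ frontier {ε : ℝ | ∃ X : Matrix (Fin 4) (Fin 4) ℝ,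
        X.PosSemidef ∧ (∀ i : Fin 4, X i i = 1 + ε) ∧
        X 0 1 = 1 ∧ X 1 2 = 1 ∧ X 2 3 = 1 ∧ X 0 3 = -1} ∧
    (∀ ε : ℝ, 0 < ε →
      (Matrix.PosDef !![1 + ε, 1; 1, 1 + ε] ∧
       Matrix.PosDef !![1 + ε, -1; -1, 1 + ε])) := by
  have hset : {ε : ℝ | ∃ X : Matrix (Fin 4) (Fin 4) ℝ, X.PosSemidef ∧
        (∀ i : Fin 4, X i i = 1 + ε) ∧
        X 0 1 = 1 ∧ X 1 2 = 1 ∧ X 2 3 = 1 ∧ X 0 3 = -1}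
      = Set.Ici (Real.sqrt 2 - 1) := by
    ext ε; simpa [Set.mem_Ici] using aux_mem ε
  refine ⟨hset, ?_, ?_⟩
  · rw [hset, frontier_Ici]; rfl
  · intro ε hε
    have h2 : ∀ v : Fin 2 → ℝ, v ≠ 0 → 0 < v 0 ^ 2 + v 1 ^ 2 := by
      intro v hv
      by_contra hc
      push_neg at hc
      apply hv
      have h0 : v 0 = 0 := by nlinarith [sq_nonneg (v 0), sq_nonneg (v 1)]
      have h1 : v 1 = 0 := by nlinarith [sq_nonneg (v 0), sq_nonneg (v 1)]
      funext i; fin_cases i <;> simpa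
    constructor <;>
    · refine posDef_iff_dotProduct_mulVec.mpr ⟨?_, fun v hv => ?_⟩
      · ext i j; fin_cases i <;> fin_cases j <;> simp [Matrix.conjTranspose_apply]
      · have hpos := h2 v hv
        simp only [dotProduct, Matrix.mulVec, Fin.sum_univ_two, star_trivial,
          Matrix.cons_val_zero, Matrix.cons_val_one, Matrix.head_cons, Pi.star_apply,
          Matrix.cons_val', Matrix.cons_val_fin_one, Matrix.empty_val',
          Matrix.head_fin_const, Matrix.of_apply]
        nlinarith [sq_nonneg (v 0 + v 1), sq_nonneg (v 0 - v 1), mul_pos hε hpos]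
end
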